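/- arXiv:1301.4243 — 8 statements merged into one kernel-verified Lean document; each statement's English description precedes it below -/
import Mathlib

section
/- There exists a constant K ≥ 1, depending only on i, j, C₀ and c₀, with the following property. Let Δ ⊆ I be a closed interval such that |F_L(x)| ≤ c / max{|A|^{1/i}, |B|^{1/j}} for all x ∈ Δ, and set V := min_{x∈Δ} |F'_L(x)| = min_{x∈Δ} |A − B f'(x)|. Then: (1) if V > 0, the length of Δ satisfies |Δ| ≤ K·c / (max{|A|^{1/i}, |B|^{1/j}}·V); and (2) if B ≠ 0, then |Δ| ≤ K·( c / (max{|A|^{1/i}, |B|^{1/j}}·|B|) )^{1/2}. -/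
set_option maxHeartbeats 1000000 in
/-- There is a constant `K ≥ 1`, depending only on `i, j, C₀, c₀`, bounding the length
of any interval `Δ ⊆ I` on which `|F_L| ≤ c / max{|A|^(1/i), |B|^(1/j)}`:
by `K·c/(max{|A|^(1/i),|B|^(1/j)}·V)` when `V := min_Δ |F_L'| > 0`, and by
`K·(c/(max{|A|^(1/i),|B|^(1/j)}·|B|))^(1/2)` when `B ≠ 0`. -/
theorem interval_length_bound
    (i j c₀ C₀ : ℝ) (hi : 0 < i) (hij : i ≤ j) (hj : j < 1) (hsum : i + j = 1)
    (hc₀ : 0 < c₀) (hC₀ : c₀ ≤ C₀) :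
    ∃ K : ℝ, 1 ≤ K ∧
      ∀ (I : Set ℝ), I.OrdConnected →
      ∀ (f f' f'' : ℝ → ℝ),
        (∀ x ∈ I, HasDerivWithinAt f (f' x) I x) →
        (∀ x ∈ I, HasDerivWithinAt f' (f'' x) I x) →
        ContinuousOn f'' I →
        (∀ x ∈ I, c₀ ≤ |f' x| ∧ |f' x| ≤ C₀ ∧ c₀ ≤ |f'' x| ∧ |f'' x| ≤ C₀) →
      ∀ (c : ℝ), 0 < c →
      ∀ (A B C : ℤ), ¬(A = 0 ∧ B = 0) →
      ∀ (a b : ℝ), a ≤ b → Set.Icc a b ⊆ I →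
        (∀ x ∈ Set.Icc a b,
          |(A : ℝ) * x - (B : ℝ) * f x + (C : ℝ)| ≤
            c / max (|(A : ℝ)| ^ ((1 : ℝ) / i)) (|(B : ℝ)| ^ ((1 : ℝ) / j))) →
      ∀ V : ℝ,
        IsLeast ((fun x => |(A : ℝ) - (B : ℝ) * f' x|) '' Set.Icc a b) V →
        ((0 < V → b - a ≤ K * c /
            (max (|(A : ℝ)| ^ ((1 : ℝ) / i)) (|(B : ℝ)| ^ ((1 : ℝ) / j)) * V)) ∧
         (B ≠ 0 → b - a ≤ K * Real.sqrt
            (c / (max (|(A : ℝ)| ^ ((1 : ℝ) / i)) (|(B : ℝ)| ^ ((1 : ℝ) / j)) *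
              |(B : ℝ)|)))) := by
  have hsqrt : 0 < Real.sqrt c₀ := Real.sqrt_pos.mpr hc₀
  have hKpos : (0:ℝ) < 2 + 6 / Real.sqrt c₀ := by positivity
  refine ⟨2 + 6 / Real.sqrt c₀, by nlinarith [div_pos (by norm_num : (0:ℝ) < 6) hsqrt], ?_⟩
  intro I hI f f' f'' hf hf' hf''cont hbounds c hc A B C hAB a b hab hsub hsmall V hV
  set K : ℝ := 2 + 6 / Real.sqrt c₀ with hK
  set M : ℝ := max (|(A : ℝ)| ^ ((1 : ℝ) / i)) (|(B : ℝ)| ^ ((1 : ℝ) / j)) with hMdef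
  have hMpos : 0 < M := by
    rw [hMdef, lt_max_iff]
    by_cases hA : A = 0
    · right
      have hB : B ≠ 0 := fun hB => hAB ⟨hA, hB⟩
      exact Real.rpow_pos_of_pos (by exact_mod_cast abs_pos.mpr (Int.cast_ne_zero.mpr hB)) _
    · left
      exact Real.rpow_pos_of_pos (by exact_mod_cast abs_pos.mpr (Int.cast_ne_zero.mpr hA)) _
  have hε : 0 < c / M := div_pos hc hMpos
  set ε : ℝ := c / M with hεdef
  set g : ℝ → ℝ := fun x => (A : ℝ) * x - (B : ℝ) * f x + (C : ℝ) with hgdef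
  set g' : ℝ → ℝ := fun x => (A : ℝ) - (B : ℝ) * f' x with hg'def
  rcases eq_or_lt_of_le hab with heq | hlt
  · constructor
    · intro hVpos
      have : (0:ℝ) ≤ K * c / (M * V) := by positivity
      linarith [this, sub_nonpos.mpr hab]
    · intro hB
      have : (0:ℝ) ≤ K * Real.sqrt (c / (M * |(B:ℝ)|)) := by positivity
      linarith [this, sub_nonpos.mpr hab]
  -- main case a < b
  have hnhds : ∀ x ∈ Set.Ioo a b, I ∈ nhds x := fun x hx =>
    Filter.mem_of_superset (Ioo_mem_nhds hx.1 hx.2) (Set.Ioo_subset_Icc_self.trans hsub)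
  have hgderiv : ∀ x ∈ Set.Ioo a b, HasDerivAt g (g' x) x := by
    intro x hx
    have hfx : HasDerivAt f (f' x) x :=
      (hf x (hsub (Set.Ioo_subset_Icc_self hx))).hasDerivAt (hnhds x hx)
    have := (((hasDerivAt_id x).const_mul (A:ℝ)).sub (hfx.const_mul (B:ℝ))).add_const (C:ℝ)
    simpa [hgdef, hg'def, mul_comm] using this
  have hg'deriv : ∀ x ∈ Set.Ioo a b, HasDerivAt g' (-(B:ℝ) * f'' x) x := by
    intro x hx
    have hfx : HasDerivAt f' (f'' x) x :=
      (hf' x (hsub (Set.Ioo_subset_Icc_self hx))).hasDerivAt (hnhds x hx)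
    have := (hfx.const_mul (B:ℝ)).const_sub (A:ℝ)
    simpa [hg'def, mul_comm] using this
  have hgcont : ContinuousOn g (Set.Icc a b) := by
    intro x hx
    have hfx : ContinuousWithinAt f (Set.Icc a b) x :=
      ((hf x (hsub hx)).continuousWithinAt).mono hsub
    exact (((continuousWithinAt_id.const_mul _).sub (hfx.const_mul _)).add
      continuousWithinAt_const)
  have hg'cont : ContinuousOn g' (Set.Icc a b) := by
    intro x hx
    have hfx : ContinuousWithinAt f' (Set.Icc a b) x :=
      ((hf' x (hsub hx)).continuousWithinAt).mono hsub
    exact (continuousWithinAt_const.sub (hfx.const_mul _))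
  have hgsmall : ∀ x ∈ Set.Icc a b, |g x| ≤ ε := fun x hx => hsmall x hx
  have hVdef : IsLeast ((fun x => |g' x|) '' Set.Icc a b) V := hV
  clear_value K M ε g g'
  clear hV hsmall
  constructor
  · -- part 1
    intro hVpos
    obtain ⟨ξ, hξ, hslope⟩ := exists_hasDerivAt_eq_slope g g' hlt hgcont hgderiv
    have hVle : V ≤ |g' ξ| := hVdef.2 ⟨ξ, Set.Ioo_subset_Icc_self hξ, rfl⟩
    have hprod : |g' ξ| * (b - a) = |g b - g a| := by
      rw [hslope, abs_div, abs_of_pos (by linarith : (0:ℝ) < b - a),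
        div_mul_cancel₀ _ (by linarith : (0:ℝ) < b - a).ne']
    have h2 : |g b - g a| ≤ 2 * ε := by
      calc |g b - g a| ≤ |g b| + |g a| := abs_sub _ _
        _ ≤ 2 * ε := by
          have := hgsmall a (Set.left_mem_Icc.mpr hab)
          have := hgsmall b (Set.right_mem_Icc.mpr hab)
          linarith
    have hmain : V * (b - a) ≤ 2 * ε := by
      calc V * (b - a) ≤ |g' ξ| * (b - a) :=
            mul_le_mul_of_nonneg_right hVle (by linarith)
        _ = |g b - g a| := hprod
        _ ≤ 2 * ε := h2
    rw [le_div_iff₀ (by positivity : (0:ℝ) < M * V)]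
    have hεM : ε * M = c := by rw [hεdef]; exact div_mul_cancel₀ c hMpos.ne'
    have hK2 : (2:ℝ) ≤ K := by
      have : 0 ≤ 6 / Real.sqrt c₀ := by positivity
      rw [hK]; linarith
    nlinarith [mul_le_mul_of_nonneg_right hmain (le_of_lt hMpos)]
  · -- part 2
    intro hB
    have hBpos : (0:ℝ) < |(B:ℝ)| := abs_pos.mpr (Int.cast_ne_zero.mpr hB)
    set ℓ : ℝ := b - a with hℓdef
    have hℓpos : 0 < ℓ := by rw [hℓdef]; linarith
    set m1 : ℝ := a + ℓ / 3 with hm1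
    set m2 : ℝ := a + 2 * ℓ / 3 with hm2
    have ham1 : a < m1 := by rw [hm1]; linarith
    have hm1m2 : m1 < m2 := by rw [hm1, hm2]; linarith
    have hm2b : m2 < b := by rw [hm2, hℓdef]; linarith
    have hd1 : m1 - a = ℓ / 3 := by rw [hm1]; ring
    have hd2 : b - m2 = ℓ / 3 := by rw [hm2, hℓdef]; ring
    clear_value ℓ m1 m2
    have hsub1 : Set.Icc a m1 ⊆ Set.Icc a b := Set.Icc_subset_Icc le_rfl (by linarith)
    have hsub2 : Set.Icc m2 b ⊆ Set.Icc m2 b := le_rfl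
    obtain ⟨ξ₁, hξ₁, e₁⟩ := exists_hasDerivAt_eq_slope g g' ham1 (hgcont.mono hsub1)
      (fun x hx => hgderiv x ⟨hx.1, lt_trans hx.2 (by linarith)⟩)
    obtain ⟨ξ₂, hξ₂, e₂⟩ := exists_hasDerivAt_eq_slope g g' hm2b
      (hgcont.mono (Set.Icc_subset_Icc (by linarith) le_rfl))
      (fun x hx => hgderiv x ⟨lt_trans (by linarith) hx.1, hx.2⟩)
    have hξ₁m : ξ₁ ∈ Set.Icc a b := ⟨le_of_lt hξ₁.1, by linarith [hξ₁.2]⟩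
    have hξ₂m : ξ₂ ∈ Set.Icc a b := ⟨by linarith [hξ₂.1], le_of_lt hξ₂.2⟩
    have hξξ : ξ₁ < ξ₂ := by linarith [hξ₁.2, hξ₂.1]
    have hgap : ℓ / 3 ≤ ξ₂ - ξ₁ := by
      have h1 := hξ₁.2; have h2 := hξ₂.1
      linarith [hξ₁.2, hξ₂.1, hd1, hd2, hm1m2]
    -- bound |g' ξ₁|
    have hb1 : |g' ξ₁| * (ℓ / 3) ≤ 2 * ε := by
      have hd := hd1
      have : |g' ξ₁| * (ℓ / 3) = |g m1 - g a| := by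
        rw [e₁, hd, abs_div, abs_of_pos (by linarith : (0:ℝ) < ℓ / 3),
          div_mul_cancel₀ _ (by linarith : (0:ℝ) < ℓ / 3).ne']
      rw [this]
      calc |g m1 - g a| ≤ |g m1| + |g a| := abs_sub _ _
        _ ≤ 2 * ε := by
          have := hgsmall a (Set.left_mem_Icc.mpr hab)
          have := hgsmall m1 ⟨by linarith, by linarith⟩
          linarith
    have hb2 : |g' ξ₂| * (ℓ / 3) ≤ 2 * ε := by
      have hd := hd2
      have : |g' ξ₂| * (ℓ / 3) = |g b - g m2| := by
        rw [e₂, hd, abs_div, abs_of_pos (by linarith : (0:ℝ) < ℓ / 3),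
          div_mul_cancel₀ _ (by linarith : (0:ℝ) < ℓ / 3).ne']
      rw [this]
      calc |g b - g m2| ≤ |g b| + |g m2| := abs_sub _ _
        _ ≤ 2 * ε := by
          have := hgsmall b (Set.right_mem_Icc.mpr hab)
          have := hgsmall m2 ⟨by linarith, by linarith⟩
          linarith
    -- MVT on g'
    obtain ⟨η, hη, eη⟩ := exists_hasDerivAt_eq_slope g' (fun x => -(B:ℝ) * f'' x) hξξ
      (hg'cont.mono (Set.Icc_subset_Icc hξ₁m.1 hξ₂m.2))
      (fun x hx => hg'deriv x ⟨lt_of_le_of_lt hξ₁m.1 hx.1, lt_of_lt_of_le hx.2 hξ₂m.2⟩)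
    have hηI : η ∈ I := hsub ⟨le_trans hξ₁m.1 (le_of_lt hη.1), le_trans (le_of_lt hη.2) hξ₂m.2⟩
    have hf''η : c₀ ≤ |f'' η| := (hbounds η hηI).2.2.1
    have hprod : |(B:ℝ)| * |f'' η| * (ξ₂ - ξ₁) = |g' ξ₂ - g' ξ₁| := by
      have : |(-(B:ℝ)) * f'' η| * (ξ₂ - ξ₁) = |g' ξ₂ - g' ξ₁| := by
        rw [eη, abs_div, abs_of_pos (by linarith : (0:ℝ) < ξ₂ - ξ₁),
          div_mul_cancel₀ _ (by linarith : (0:ℝ) < ξ₂ - ξ₁).ne']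
      rw [← this, abs_mul, abs_neg]
    have hdiff : |g' ξ₂ - g' ξ₁| ≤ |g' ξ₂| + |g' ξ₁| := abs_sub _ _
    -- combine: c₀ * |B| * ℓ^2 ≤ 36 * ε
    have hmain : c₀ * |(B:ℝ)| * ℓ ^ 2 ≤ 36 * ε := by
      have h0 : c₀ * |(B:ℝ)| ≤ |(B:ℝ)| * |f'' η| := by
        rw [mul_comm |(B:ℝ)| _]
        exact mul_le_mul_of_nonneg_right hf''η (abs_nonneg _)
      have h1 : c₀ * |(B:ℝ)| * (ξ₂ - ξ₁) ≤ |g' ξ₂| + |g' ξ₁| := by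
        calc c₀ * |(B:ℝ)| * (ξ₂ - ξ₁) ≤ |(B:ℝ)| * |f'' η| * (ξ₂ - ξ₁) :=
              mul_le_mul_of_nonneg_right h0 (by linarith)
          _ = |g' ξ₂ - g' ξ₁| := hprod
          _ ≤ |g' ξ₂| + |g' ξ₁| := hdiff
      have h2 : c₀ * |(B:ℝ)| * (ξ₂ - ξ₁) * (ℓ / 3) ≤ (|g' ξ₂| + |g' ξ₁|) * (ℓ / 3) :=
        mul_le_mul_of_nonneg_right h1 (by linarith)
      have h3 : (|g' ξ₂| + |g' ξ₁|) * (ℓ / 3) ≤ 4 * ε := by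
        rw [add_mul]; linarith
      have h4 : c₀ * |(B:ℝ)| * (ℓ / 3) * (ℓ / 3) ≤ c₀ * |(B:ℝ)| * (ξ₂ - ξ₁) * (ℓ / 3) :=
        mul_le_mul_of_nonneg_right
          (mul_le_mul_of_nonneg_left hgap (by positivity)) (by linarith)
      have h5 : c₀ * |(B:ℝ)| * ℓ ^ 2 = 9 * (c₀ * |(B:ℝ)| * (ℓ / 3) * (ℓ / 3)) := by ring
      linarith
    -- conclude
    have ht : ε / |(B:ℝ)| = c / (M * |(B:ℝ)|) := by rw [hεdef, div_div]
    set t : ℝ := c / (M * |(B:ℝ)|) with htdef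
    have htpos : 0 < t := by rw [htdef]; positivity
    clear_value t
    have hℓsq : ℓ ^ 2 ≤ K ^ 2 * t := by
      have h36 : ℓ ^ 2 ≤ 36 * t / c₀ := by
        have hεt : ε = t * |(B:ℝ)| := (div_eq_iff hBpos.ne').mp ht
        rw [le_div_iff₀ hc₀]
        nlinarith [hmain, hBpos, hεt]
      have hKge : 6 / Real.sqrt c₀ ≤ K := by rw [hK]; linarith
      have hKsq : 36 / c₀ ≤ K ^ 2 := by
        have h6 : (0:ℝ) < 6 / Real.sqrt c₀ := by positivity
        have : (6 / Real.sqrt c₀) ^ 2 = 36 / c₀ := by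
          rw [div_pow, Real.sq_sqrt (le_of_lt hc₀)]; norm_num
        nlinarith
      calc ℓ ^ 2 ≤ 36 * t / c₀ := h36
        _ = (36 / c₀) * t := by ring
        _ ≤ K ^ 2 * t := mul_le_mul_of_nonneg_right hKsq (le_of_lt htpos)
    have hs1 : ℓ ≤ Real.sqrt (K ^ 2 * t) := by
      rw [show (ℓ:ℝ) = Real.sqrt (ℓ ^ 2) from (Real.sqrt_sq (le_of_lt hℓpos)).symm]
      exact Real.sqrt_le_sqrt hℓsq
    have hs2 : Real.sqrt (K ^ 2 * t) = K * Real.sqrt t := by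
      rw [Real.sqrt_mul (sq_nonneg K), Real.sqrt_sq (le_of_lt hKpos)]
    rw [hs2] at hs1
    linarith [hs1, hℓdef.le]
end

section
/- Let n, k, l, m be integers with n ≥ 1, 0 ≤ k, l ≥ 0, m ≥ 0, and let c₁' > 0 satisfy c₁' ≥ 2K c^{1/2} 2^{−k} R and 8 C₀ c₁' R^{−n} ≤ 2^{−m} R^{−λ l}. Let Δ be a closed interval centered at a point x₁ with length |Δ| = 2K c^{1/2} / H, where H := c^{−1/2} V max{|A|^{1/i}, |B|^{1/j}} and V := min_{x∈Δ} |F'_L(x)|, attained at x₀ ∈ Δ; suppose |F_L(x₁)| ≤ c / max{|A|^{1/i}, |B|^{1/j}}, that 2^k R^{n−1} ≤ H < 2^{k+1} R^{n−1}, and that 2^{−m−1} R^{−λ l} (C₀+1) max{|A|,|B|} < V ≤ 2^{−m} R^{−λ l} (C₀+1) max{|A|,|B|}. Let J ⊆ I be an interval of length |J| = c₁' R^{−n} with Δ ∩ J ≠ ∅. Then for every x ∈ J one has (1/2)·V ≤ |F'_L(x)| ≤ (3/2)·V and |F_L(x)| ≤ 5·|J|·V. -/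
/-- `max{|A|^(1/i), |B|^(1/j)}`. -/
noncomputable def Mnum (i j : ℝ) (A B : ℤ) : ℝ :=
  max (|(A : ℝ)| ^ ((1 : ℝ) / i)) (|(B : ℝ)| ^ ((1 : ℝ) / j))

/-- `F_L(x) = Ax − B f(x) + C`. -/
noncomputable def FL (A B C : ℤ) (f : ℝ → ℝ) (x : ℝ) : ℝ :=
  (A : ℝ) * x - (B : ℝ) * f x + (C : ℝ)

set_option maxHeartbeats 1000000 in
/-- On any interval `J` of length `c₁'R^(−n)` meeting an interval `Δ` of class
`C(n,k,l,m)`, provided `8C₀c₁'R^(−n) ≤ 2^(−m)R^(−λl)`, one has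
`V/2 ≤ |F_L'(x)| ≤ (3/2)V` and `|F_L(x)| ≤ 5|J|V` for all `x ∈ J`. -/
theorem lemma_vp
    (i j c₀ C₀ c lam K : ℝ) (R n k l m : ℕ)
    (hi : 0 < i) (hij : i ≤ j) (hj : j < 1) (hsum : i + j = 1)
    (hc₀ : 0 < c₀) (hC₀ : c₀ ≤ C₀) (hc : 0 < c) (hR : 2 ≤ R)
    (hlam : 0 < lam) (hK : 1 ≤ K) (hn : 1 ≤ n)
    (I : Set ℝ) (hI : I.OrdConnected)
    (f f' f'' : ℝ → ℝ)
    (hf' : ∀ x ∈ I, HasDerivWithinAt f (f' x) I x)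
    (hf'' : ∀ x ∈ I, HasDerivWithinAt f' (f'' x) I x)
    (hbounds : ∀ x ∈ I, c₀ ≤ |f' x| ∧ |f' x| ≤ C₀ ∧ c₀ ≤ |f'' x| ∧ |f'' x| ≤ C₀)
    (A B C : ℤ) (hAB : ¬(A = 0 ∧ B = 0))
    (c₁' : ℝ) (hc₁pos : 0 < c₁')
    (hc₁1 : 2 * K * Real.sqrt c * (2 : ℝ) ^ (-(k : ℝ)) * (R : ℝ) ≤ c₁')
    (hc₁2 : 8 * C₀ * c₁' * (R : ℝ) ^ (-(n : ℝ)) ≤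
      (2 : ℝ) ^ (-(m : ℝ)) * (R : ℝ) ^ (-(lam * (l : ℝ))))
    (a b V H x₀ : ℝ) (hab : a ≤ b) (hΔI : Set.Icc a b ⊆ I)
    (hV : IsLeast ((fun x => |(A : ℝ) - (B : ℝ) * f' x|) '' Set.Icc a b) V)
    (hx₀mem : x₀ ∈ Set.Icc a b) (hx₀ : |(A : ℝ) - (B : ℝ) * f' x₀| = V)
    (hH : H = V * Mnum i j A B / Real.sqrt c)
    (hlen : b - a = 2 * K * Real.sqrt c / H)
    (hF₁ : |FL A B C f ((a + b) / 2)| ≤ c / Mnum i j A B)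
    (hHlow : (2 : ℝ) ^ (k : ℝ) * (R : ℝ) ^ ((n : ℝ) - 1) ≤ H)
    (hHup : H < (2 : ℝ) ^ ((k : ℝ) + 1) * (R : ℝ) ^ ((n : ℝ) - 1))
    (hVlow : (2 : ℝ) ^ (-(m : ℝ) - 1) * (R : ℝ) ^ (-(lam * (l : ℝ))) * (C₀ + 1) *
      max |(A : ℝ)| |(B : ℝ)| < V)
    (hVup : V ≤ (2 : ℝ) ^ (-(m : ℝ)) * (R : ℝ) ^ (-(lam * (l : ℝ))) * (C₀ + 1) *
      max |(A : ℝ)| |(B : ℝ)|)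
    (u v : ℝ) (hJlen : v - u = c₁' * (R : ℝ) ^ (-(n : ℝ)))
    (hJI : Set.Icc u v ⊆ I)
    (hmeet : (Set.Icc a b ∩ Set.Icc u v).Nonempty) :
    ∀ x ∈ Set.Icc u v,
      V / 2 ≤ |(A : ℝ) - (B : ℝ) * f' x| ∧
      |(A : ℝ) - (B : ℝ) * f' x| ≤ 3 / 2 * V ∧
      |FL A B C f x| ≤ 5 * (v - u) * V := by
    -- basic positivity facts
  have hC₀pos : (0:ℝ) < C₀ := lt_of_lt_of_le hc₀ hC₀
  have hRpos : (0:ℝ) < (R:ℝ) := by exact_mod_cast (by omega : 0 < R)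
  have hsc : (0:ℝ) < Real.sqrt c := Real.sqrt_pos.mpr hc
  have hsq : Real.sqrt c * Real.sqrt c = c := Real.mul_self_sqrt hc.le
  set M : ℝ := max |(A : ℝ)| |(B : ℝ)| with hM
  have hMpos : 0 < M := by
    rcases not_and_or.mp hAB with h | h
    · exact lt_max_of_lt_left (abs_pos.mpr (by exact_mod_cast h))
    · exact lt_max_of_lt_right (abs_pos.mpr (by exact_mod_cast h))
  have hP2 : (0:ℝ) < (2:ℝ) ^ (-(m:ℝ) - 1) := Real.rpow_pos_of_pos two_pos _
  have hPR : (0:ℝ) < (R:ℝ) ^ (-(lam * (l:ℝ))) := Real.rpow_pos_of_pos hRpos _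
  have hRn : (0:ℝ) < (R:ℝ) ^ (-(n:ℝ)) := Real.rpow_pos_of_pos hRpos _
  have hVpos : 0 < V :=
    lt_trans (mul_pos (mul_pos (mul_pos hP2 hPR) (by linarith : (0:ℝ) < C₀ + 1)) hMpos) hVlow
  have hJpos : 0 < v - u := by rw [hJlen]; exact mul_pos hc₁pos hRn
  have huv : u ≤ v := by linarith
  have hHpos : 0 < H :=
    lt_of_lt_of_le (mul_pos (Real.rpow_pos_of_pos two_pos _) (Real.rpow_pos_of_pos hRpos _)) hHlow
  set g : ℝ → ℝ := fun x => (A : ℝ) - (B : ℝ) * f' x with hg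
  -- key inequality 1 : C₀ * M * (v - u) ≤ V / 4
  have h2m : (2:ℝ) ^ (-(m:ℝ)) = 2 * (2:ℝ) ^ (-(m:ℝ) - 1) := by
    have e : (1 : ℝ) + (-(m:ℝ) - 1) = -(m:ℝ) := by ring
    conv_lhs => rw [← e, Real.rpow_add two_pos, Real.rpow_one]
  have key1 : C₀ * M * (v - u) ≤ V / 4 := by
    set Q : ℝ := (2:ℝ) ^ (-(m:ℝ) - 1) * (R:ℝ) ^ (-(lam * (l:ℝ))) with hQdef
    have hQpos : 0 < Q := mul_pos hP2 hPR
    have h1 : C₀ * (v - u) * 8 ≤ 2 * Q := by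
      have e1 : C₀ * (c₁' * (R:ℝ) ^ (-(n:ℝ))) * 8 = 8 * C₀ * c₁' * (R:ℝ) ^ (-(n:ℝ)) := by
        ring
      rw [hJlen, e1]
      calc 8 * C₀ * c₁' * (R:ℝ) ^ (-(n:ℝ))
          ≤ (2:ℝ) ^ (-(m:ℝ)) * (R:ℝ) ^ (-(lam * (l:ℝ))) := hc₁2
        _ = 2 * Q := by rw [h2m, hQdef]; ring
    have h2 : C₀ * (v - u) * 8 * M ≤ 2 * Q * M :=
      mul_le_mul_of_nonneg_right h1 hMpos.le
    have h3 : (0:ℝ) ≤ Q * M * C₀ :=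
      mul_nonneg (mul_nonneg hQpos.le hMpos.le) hC₀pos.le
    linarith [hVlow, h2, h3]
  -- Δ is shorter than J
  have hΔlen : b - a ≤ v - u := by
    have hprod : (2:ℝ) ^ (-(k:ℝ)) * (R:ℝ) * ((R:ℝ) ^ (-(n:ℝ)) *
        ((2:ℝ) ^ (k:ℝ) * (R:ℝ) ^ ((n:ℝ) - 1))) = 1 := by
      rw [show ((R:ℝ) ^ (-(n:ℝ)) * ((2:ℝ) ^ (k:ℝ) * (R:ℝ) ^ ((n:ℝ) - 1)))
          = (2:ℝ) ^ (k:ℝ) * ((R:ℝ) ^ (-(n:ℝ)) * (R:ℝ) ^ ((n:ℝ) - 1)) by ring,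
        ← Real.rpow_add hRpos]
      rw [show (-(n:ℝ) + ((n:ℝ) - 1)) = -1 by ring, Real.rpow_neg_one]
      rw [show (2:ℝ) ^ (-(k:ℝ)) * (R:ℝ) * ((2:ℝ) ^ (k:ℝ) * ((R:ℝ))⁻¹)
          = ((2:ℝ) ^ (-(k:ℝ)) * (2:ℝ) ^ (k:ℝ)) * ((R:ℝ) * ((R:ℝ))⁻¹) by ring,
        ← Real.rpow_add two_pos, mul_inv_cancel₀ hRpos.ne']
      norm_num
    rw [hlen, hJlen, div_le_iff₀ hHpos]
    calc 2 * K * Real.sqrt c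
        = 2 * K * Real.sqrt c * ((2:ℝ) ^ (-(k:ℝ)) * (R:ℝ) * ((R:ℝ) ^ (-(n:ℝ)) *
            ((2:ℝ) ^ (k:ℝ) * (R:ℝ) ^ ((n:ℝ) - 1)))) := by rw [hprod, mul_one]
      _ = (2 * K * Real.sqrt c * (2:ℝ) ^ (-(k:ℝ)) * (R:ℝ)) * ((R:ℝ) ^ (-(n:ℝ)) *
            ((2:ℝ) ^ (k:ℝ) * (R:ℝ) ^ ((n:ℝ) - 1))) := by ring
      _ ≤ c₁' * ((R:ℝ) ^ (-(n:ℝ)) * ((2:ℝ) ^ (k:ℝ) * (R:ℝ) ^ ((n:ℝ) - 1))) := by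
            exact mul_le_mul_of_nonneg_right hc₁1
              (mul_nonneg (Real.rpow_pos_of_pos hRpos _).le
                (mul_nonneg (Real.rpow_pos_of_pos two_pos _).le
                  (Real.rpow_pos_of_pos hRpos _).le))
      _ = c₁' * (R:ℝ) ^ (-(n:ℝ)) * ((2:ℝ) ^ (k:ℝ) * (R:ℝ) ^ ((n:ℝ) - 1)) := by ring
      _ ≤ c₁' * (R:ℝ) ^ (-(n:ℝ)) * H := by
            exact mul_le_mul_of_nonneg_left hHlow
              (mul_nonneg hc₁pos.le (Real.rpow_pos_of_pos hRpos _).le)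
  have key2 : C₀ * M * (b - a) ≤ V / 4 := by
    have h0 : (0:ℝ) ≤ C₀ * M := mul_nonneg hC₀pos.le hMpos.le
    have := mul_le_mul_of_nonneg_left hΔlen h0
    linarith [key1]
  -- Lipschitz bound for g on I
  have hIconv : Convex ℝ I := convex_iff_ordConnected.mpr hI
  have hgderiv : ∀ x ∈ I, HasDerivWithinAt g (-((B:ℝ) * f'' x)) I x := fun x hx =>
    ((hf'' x hx).const_mul (B:ℝ)).const_sub (A:ℝ)
  have hgbound : ∀ x ∈ I, ‖-((B:ℝ) * f'' x)‖ ≤ C₀ * M := by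
    intro x hx
    rw [Real.norm_eq_abs, abs_neg, abs_mul]
    have h1 : |(B:ℝ)| ≤ M := le_max_right _ _
    have h2 : |f'' x| ≤ C₀ := (hbounds x hx).2.2.2
    calc |(B:ℝ)| * |f'' x| ≤ M * C₀ :=
          mul_le_mul h1 h2 (abs_nonneg _) (le_trans (abs_nonneg _) h1)
      _ = C₀ * M := mul_comm _ _
  have hglip : ∀ x ∈ I, ∀ y ∈ I, |g y - g x| ≤ C₀ * M * |y - x| := by
    intro x hx y hy
    have := Convex.norm_image_sub_le_of_norm_hasDerivWithin_le hgderiv hgbound hIconv hx hy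
    simpa [Real.norm_eq_abs] using this
  -- derivative of FL
  have hFderiv : ∀ x ∈ I, HasDerivWithinAt (FL A B C f) (g x) I x := by
    intro x hx
    have h1 : HasDerivWithinAt (fun y : ℝ => (A:ℝ) * y - (B:ℝ) * f y + (C:ℝ))
        ((A:ℝ) * 1 - (B:ℝ) * f' x) I x :=
      (((hasDerivWithinAt_id x I).const_mul (A:ℝ)).sub ((hf' x hx).const_mul (B:ℝ))).add_const _
    show HasDerivWithinAt (fun y : ℝ => (A:ℝ) * y - (B:ℝ) * f y + (C:ℝ)) (g x) I x
    simpa [FL, hg] using h1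
  -- pick a point in the intersection
  obtain ⟨y, hyΔ, hyJ⟩ := hmeet
  have hx₀I : x₀ ∈ I := hΔI hx₀mem
  -- bound of |g| on Δ
  have hgΔ : ∀ t ∈ Set.Icc a b, |g t| ≤ 5 / 4 * V := by
    intro t ht
    have h1 : |g t - g x₀| ≤ C₀ * M * |t - x₀| := hglip x₀ hx₀I t (hΔI ht)
    have h2 : |t - x₀| ≤ b - a :=
      abs_le.mpr ⟨by linarith [ht.1, hx₀mem.2], by linarith [ht.2, hx₀mem.1]⟩
    have h3 : C₀ * M * |t - x₀| ≤ C₀ * M * (b - a) :=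
      mul_le_mul_of_nonneg_left h2 (mul_nonneg hC₀pos.le hMpos.le)
    have h4 : |g t| - |g x₀| ≤ |g t - g x₀| := by
      have := abs_sub_abs_le_abs_sub (g t) (g x₀)
      linarith
    rw [hx₀] at h4
    linarith [key2]
  -- two-sided bound of |g| on J
  have hgJ : ∀ x ∈ Set.Icc u v, V / 2 ≤ |g x| ∧ |g x| ≤ 3 / 2 * V := by
    intro x hx
    have h1 : |g x - g y| ≤ C₀ * M * |x - y| := hglip y (hJI hyJ) x (hJI hx)
    have h2 : |x - y| ≤ v - u :=
      abs_le.mpr ⟨by linarith [hx.1, hyJ.2], by linarith [hx.2, hyJ.1]⟩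
    have h3 : |g x - g y| ≤ V / 4 := by
      have := mul_le_mul_of_nonneg_left h2 (mul_nonneg hC₀pos.le hMpos.le)
      linarith [key1]
    have hylow : V ≤ |g y| := hV.2 ⟨y, hyΔ, rfl⟩
    have hyup : |g y| ≤ 5 / 4 * V := hgΔ y hyΔ
    constructor
    · have := abs_sub_abs_le_abs_sub (g y) (g x)
      have habs : |g y - g x| = |g x - g y| := abs_sub_comm _ _
      linarith
    · have := abs_sub_abs_le_abs_sub (g x) (g y)
      linarith
  -- the union interval s
  have haI : a ∈ I := hΔI ⟨le_refl a, hab⟩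
  have hbI : b ∈ I := hΔI ⟨hab, le_refl b⟩
  have huI : u ∈ I := hJI ⟨le_refl u, huv⟩
  have hvI : v ∈ I := hJI ⟨huv, le_refl v⟩
  set s : Set ℝ := Set.Icc (min a u) (max b v) with hs
  have hminI : min a u ∈ I := by
    rcases min_choice a u with hmc | hmc <;> rw [hmc] <;> assumption
  have hmaxI : max b v ∈ I := by
    rcases max_choice b v with hmc | hmc <;> rw [hmc] <;> assumption
  have hsI : s ⊆ I := hI.out hminI hmaxI
  have hΔs : Set.Icc a b ⊆ s := Set.Icc_subset_Icc (min_le_left _ _) (le_max_left _ _)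
  have hJs : Set.Icc u v ⊆ s := Set.Icc_subset_Icc (min_le_right _ _) (le_max_right _ _)
  have hsub : s ⊆ Set.Icc a b ∪ Set.Icc u v := by
    intro t ht
    rcases le_total t y with h | h
    · rcases min_choice a u with hmc | hmc
      · exact Or.inl ⟨hmc ▸ ht.1, le_trans h hyΔ.2⟩
      · exact Or.inr ⟨hmc ▸ ht.1, le_trans h hyJ.2⟩
    · rcases max_choice b v with hmc | hmc
      · exact Or.inl ⟨le_trans hyΔ.1 h, hmc ▸ ht.2⟩
      · exact Or.inr ⟨le_trans hyJ.1 h, hmc ▸ ht.2⟩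
  have hgs : ∀ t ∈ s, ‖g t‖ ≤ 3 / 2 * V := by
    intro t ht
    rw [Real.norm_eq_abs]
    rcases hsub ht with h | h
    · linarith [hgΔ t h, hVpos]
    · exact (hgJ t h).2
  -- Lipschitz bound for FL on s
  have hFlip : ∀ p ∈ s, ∀ q ∈ s, |FL A B C f q - FL A B C f p| ≤ 3 / 2 * V * |q - p| := by
    intro p hp q hq
    have hd : ∀ x ∈ s, HasDerivWithinAt (FL A B C f) (g x) s x := fun x hx =>
      (hFderiv x (hsI hx)).mono hsI
    have := Convex.norm_image_sub_le_of_norm_hasDerivWithin_le hd hgs (convex_Icc _ _) hp hq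
    simpa [Real.norm_eq_abs] using this
  -- bound |FL x₁|
  have hHne : H ≠ 0 := hHpos.ne'
  have hVMn : V * Mnum i j A B = H * Real.sqrt c := by
    rw [hH, div_mul_cancel₀ _ hsc.ne']
  have hMnpos : 0 < Mnum i j A B := by
    nlinarith [mul_pos hHpos hsc, hVpos, hVMn]
  have hF₁' : |FL A B C f ((a + b) / 2)| ≤ (v - u) * V / 2 := by
    have hKpos : (0:ℝ) < K := by linarith
    have hstep : c / Mnum i j A B ≤ (b - a) * V / 2 := by
      rw [div_le_iff₀ hMnpos, hlen]
      have heq : 2 * K * Real.sqrt c / H * V / 2 * Mnum i j A B = K * c := by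
        field_simp
        linear_combination (Real.sqrt c) * hVMn + H * hsq
      rw [heq]
      nlinarith [mul_nonneg (sub_nonneg.mpr hK) hc.le]
    have hstep2 : (b - a) * V / 2 ≤ (v - u) * V / 2 := by
      nlinarith [mul_nonneg (sub_nonneg.mpr hΔlen) hVpos.le]
    linarith [hF₁]
  -- conclusion
  intro x hx
  refine ⟨(hgJ x hx).1, (hgJ x hx).2, ?_⟩
  have hx₁Δ : (a + b) / 2 ∈ Set.Icc a b := ⟨by linarith, by linarith⟩
  have hdist : |x - (a + b) / 2| ≤ 2 * (v - u) := by
    have h1 : x - (a + b) / 2 ≤ (v - u) + (b - a) := by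
      have := hyΔ.1; have := hyΔ.2; have := hyJ.1; have := hyJ.2
      have := hx.1; have := hx.2; have := hx₁Δ.1
      linarith
    have h2 : (a + b) / 2 - x ≤ (b - a) + (v - u) := by
      have := hyΔ.1; have := hyΔ.2; have := hyJ.1; have := hyJ.2
      have := hx.1; have := hx.2; have := hx₁Δ.2
      linarith
    refine abs_le.mpr ⟨by linarith, by linarith⟩
  have hF2 : |FL A B C f x - FL A B C f ((a + b) / 2)| ≤ 3 / 2 * V * (2 * (v - u)) := by
    have := hFlip ((a + b) / 2) (hΔs hx₁Δ) x (hJs hx)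
    have hmul := mul_le_mul_of_nonneg_left hdist (by linarith : (0:ℝ) ≤ 3 / 2 * V)
    linarith
  have htri : |FL A B C f x| ≤ |FL A B C f ((a + b) / 2)| +
      |FL A B C f x - FL A B C f ((a + b) / 2)| := by
    have := abs_sub_abs_le_abs_sub (FL A B C f x) (FL A B C f ((a + b) / 2))
    linarith [abs_nonneg (FL A B C f x - FL A B C f ((a + b) / 2))]
  nlinarith [hF₁', hF2, htri, mul_pos hJpos hVpos]
end

section
/- Let n, k be integers with n ≥ 1, k ≥ 0, and let c₁' > 0 satisfy c₁' ≥ 2K c^{1/2} 2^{−k} R. Let Δ be a closed interval centered at a point x₁ with length |Δ| = 2K c^{1/2} / H, where H := c^{−1/2} V max{|A|^{1/i}, |B|^{1/j}} and V := min_{x∈Δ} |F'_L(x)|, attained at x₀ ∈ Δ; suppose |F_L(x₁)| ≤ c / max{|A|^{1/i}, |B|^{1/j}}, that 2^k R^{n−1} ≤ H < 2^{k+1} R^{n−1}, and that V ≤ 8 C₀ |J| max{|A|,|B|}, where J ⊆ I is an interval of length |J| = c₁' R^{−n} with Δ ∩ J ≠ ∅. Then for every x ∈ J one has |F'_L(x)|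 ≤ 10 C₀ |J| max{|A|,|B|} and |F_L(x)| ≤ 30 C₀ |J|² max{|A|,|B|}. -/
set_option maxHeartbeats 1000000 in
/-- On any interval `J` of length `c₁'R^(−n)` meeting a Type 1 interval `Δ` whose
minimal derivative satisfies `V ≤ 8C₀|J|max{|A|,|B|}`, one has
`|F_L'(x)| ≤ 10C₀|J|max{|A|,|B|}` and `|F_L(x)| ≤ 30C₀|J|²max{|A|,|B|}` on `J`. -/
theorem lemma_vp2
    (i j c₀ C₀ c K : ℝ) (R n k : ℕ)
    (hi : 0 < i) (hij : i ≤ j) (hj : j < 1) (hsum : i + j = 1)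
    (hc₀ : 0 < c₀) (hC₀ : c₀ ≤ C₀) (hc : 0 < c) (hR : 2 ≤ R)
    (hK : 1 ≤ K) (hn : 1 ≤ n)
    (I : Set ℝ) (hI : I.OrdConnected)
    (f f' f'' : ℝ → ℝ)
    (hf' : ∀ x ∈ I, HasDerivWithinAt f (f' x) I x)
    (hf'' : ∀ x ∈ I, HasDerivWithinAt f' (f'' x) I x)
    (hbounds : ∀ x ∈ I, c₀ ≤ |f' x| ∧ |f' x| ≤ C₀ ∧ c₀ ≤ |f'' x| ∧ |f'' x| ≤ C₀)
    (A B C : ℤ) (hAB : ¬(A = 0 ∧ B = 0))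
    (c₁' : ℝ) (hc₁pos : 0 < c₁')
    (hc₁1 : 2 * K * Real.sqrt c * (2 : ℝ) ^ (-(k : ℝ)) * (R : ℝ) ≤ c₁')
    (a b V H x₀ : ℝ) (hab : a ≤ b) (hΔI : Set.Icc a b ⊆ I)
    (hV : IsLeast ((fun x => |(A : ℝ) - (B : ℝ) * f' x|) '' Set.Icc a b) V)
    (hx₀mem : x₀ ∈ Set.Icc a b) (hx₀ : |(A : ℝ) - (B : ℝ) * f' x₀| = V)
    (hH : H = V * Mnum i j A B / Real.sqrt c)
    (hlen : b - a = 2 * K * Real.sqrt c / H)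
    (hF₁ : |FL A B C f ((a + b) / 2)| ≤ c / Mnum i j A B)
    (hHlow : (2 : ℝ) ^ (k : ℝ) * (R : ℝ) ^ ((n : ℝ) - 1) ≤ H)
    (hHup : H < (2 : ℝ) ^ ((k : ℝ) + 1) * (R : ℝ) ^ ((n : ℝ) - 1))
    (u v : ℝ) (hJlen : v - u = c₁' * (R : ℝ) ^ (-(n : ℝ)))
    (hJI : Set.Icc u v ⊆ I)
    (hmeet : (Set.Icc a b ∩ Set.Icc u v).Nonempty)
    (hVsmall : V ≤ 8 * C₀ * (v - u) * max |(A : ℝ)| |(B : ℝ)|) :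
    ∀ x ∈ Set.Icc u v,
      |(A : ℝ) - (B : ℝ) * f' x| ≤ 10 * C₀ * (v - u) * max |(A : ℝ)| |(B : ℝ)| ∧
      |FL A B C f x| ≤ 30 * C₀ * (v - u) ^ 2 * max |(A : ℝ)| |(B : ℝ)| := by
  -- basic positivity facts
  have hRpos : (0:ℝ) < (R:ℝ) := by
    have : (2:ℝ) ≤ (R:ℝ) := by exact_mod_cast hR
    linarith
  have hsc : (0:ℝ) < Real.sqrt c := Real.sqrt_pos.mpr hc
  have hC₀pos : 0 < C₀ := lt_of_lt_of_le hc₀ hC₀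
  have hMabs : (0:ℝ) ≤ max |(A : ℝ)| |(B : ℝ)| := le_trans (abs_nonneg _) (le_max_left _ _)
  have hvu : 0 < v - u := by
    rw [hJlen]
    have := Real.rpow_pos_of_pos hRpos (-(n:ℝ))
    positivity
  have hM : 0 < Mnum i j A B := by
    rcases Decidable.em (A = 0) with hA | hA
    · have hB : B ≠ 0 := fun hB => hAB ⟨hA, hB⟩
      have : (0:ℝ) < |(B:ℝ)| := by
        simp only [abs_pos, ne_eq, Int.cast_eq_zero]; exact hB
      exact lt_of_lt_of_le (Real.rpow_pos_of_pos this _) (le_max_right _ _)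
    · have : (0:ℝ) < |(A:ℝ)| := by
        simp only [abs_pos, ne_eq, Int.cast_eq_zero]; exact hA
      exact lt_of_lt_of_le (Real.rpow_pos_of_pos this _) (le_max_left _ _)
  have hPQpos : (0:ℝ) < (2:ℝ) ^ (k:ℝ) * (R:ℝ) ^ ((n:ℝ) - 1) := by
    have h1 := Real.rpow_pos_of_pos (show (0:ℝ) < 2 by norm_num) (k:ℝ)
    have h2 := Real.rpow_pos_of_pos hRpos ((n:ℝ) - 1)
    positivity
  have hHpos : 0 < H := lt_of_lt_of_le hPQpos hHlow
  have hVpos : 0 < V := by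
    rcases lt_or_ge 0 V with h | h
    · exact h
    · exfalso
      have : H ≤ 0 := by
        rw [hH]
        have : V * Mnum i j A B ≤ 0 := mul_nonpos_of_nonpos_of_nonneg h hM.le
        exact div_nonpos_of_nonpos_of_nonneg this hsc.le
      linarith
  have hKpos : (0:ℝ) < K := lt_of_lt_of_le one_pos hK
  -- key size estimate : 2K(√c/H) ≤ v - u
  have hkey : 2 * K * (Real.sqrt c / H) ≤ v - u := by
    have h1 : 2 * K * Real.sqrt c / H ≤ 2 * K * Real.sqrt c / ((2:ℝ)^(k:ℝ) * (R:ℝ)^((n:ℝ)-1)) :=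
      div_le_div_of_nonneg_left (by positivity) hPQpos hHlow
    have h2 : 2 * K * Real.sqrt c / ((2:ℝ)^(k:ℝ) * (R:ℝ)^((n:ℝ)-1))
        = (2 * K * Real.sqrt c * (2:ℝ)^(-(k:ℝ)) * (R:ℝ)) * (R:ℝ)^(-(n:ℝ)) := by
      have e1 : (2:ℝ)^(-(k:ℝ)) = ((2:ℝ)^(k:ℝ))⁻¹ := by
        rw [Real.rpow_neg (by norm_num : (0:ℝ) ≤ 2)]
      have e2 : (R:ℝ)^(-(n:ℝ)) = ((R:ℝ)^((n:ℝ)-1))⁻¹ * (R:ℝ)⁻¹ := by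
        rw [show -(n:ℝ) = (-((n:ℝ)-1)) + (-1) by ring, Real.rpow_add hRpos,
          Real.rpow_neg hRpos.le, Real.rpow_neg_one]
      have h2nz : ((2:ℝ)^(k:ℝ)) ≠ 0 := (Real.rpow_pos_of_pos (by norm_num) _).ne'
      have hRnz : ((R:ℝ)^((n:ℝ)-1)) ≠ 0 := (Real.rpow_pos_of_pos hRpos _).ne'
      rw [e1, e2]
      field_simp
    have h4 : (2 * K * Real.sqrt c * (2:ℝ)^(-(k:ℝ)) * (R:ℝ)) * (R:ℝ)^(-(n:ℝ))
        ≤ c₁' * (R:ℝ)^(-(n:ℝ)) :=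
      mul_le_mul_of_nonneg_right hc₁1 (Real.rpow_pos_of_pos hRpos _).le
    calc 2 * K * (Real.sqrt c / H) = 2 * K * Real.sqrt c / H := by ring
      _ ≤ 2 * K * Real.sqrt c / ((2:ℝ)^(k:ℝ) * (R:ℝ)^((n:ℝ)-1)) := h1
      _ = (2 * K * Real.sqrt c * (2:ℝ)^(-(k:ℝ)) * (R:ℝ)) * (R:ℝ)^(-(n:ℝ)) := h2
      _ ≤ c₁' * (R:ℝ)^(-(n:ℝ)) := h4
      _ = v - u := hJlen.symm
  have hscH : Real.sqrt c / H ≤ (v - u) / 2 := by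
    have h0 : (0:ℝ) ≤ Real.sqrt c / H := by positivity
    nlinarith
  have hba : b - a ≤ v - u := by
    rw [hlen]
    calc 2 * K * Real.sqrt c / H = 2 * K * (Real.sqrt c / H) := by ring
      _ ≤ v - u := hkey
  -- c / M ≤ 4 C₀ (v-u)^2 max
  have hcM : c / Mnum i j A B ≤ 4 * C₀ * (v - u)^2 * max |(A : ℝ)| |(B : ℝ)| := by
    have he : c / Mnum i j A B = V * (Real.sqrt c / H) := by
      rw [hH, div_div_eq_mul_div, Real.mul_self_sqrt hc.le]
      field_simp
    have h1 : V * (Real.sqrt c / H) ≤ V * ((v - u) / 2) :=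
      mul_le_mul_of_nonneg_left hscH hVpos.le
    have h2 : V * ((v - u) / 2) ≤ (8 * C₀ * (v - u) * max |(A : ℝ)| |(B : ℝ)|) * ((v - u) / 2) :=
      mul_le_mul_of_nonneg_right hVsmall (by positivity)
    calc c / Mnum i j A B = V * (Real.sqrt c / H) := he
      _ ≤ V * ((v - u) / 2) := h1
      _ ≤ (8 * C₀ * (v - u) * max |(A : ℝ)| |(B : ℝ)|) * ((v - u) / 2) := h2
      _ = 4 * C₀ * (v - u)^2 * max |(A : ℝ)| |(B : ℝ)| := by ring
  -- the hull W of Δ ∪ J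
  have huv : u ≤ v := by linarith
  set lo := min a u with hlo
  set hi' := max b v with hhi
  have hW : Set.Icc lo hi' ⊆ I := by
    apply hI.out
    · rcases le_total a u with h | h
      · rw [hlo, min_eq_left h]; exact hΔI ⟨le_refl a, hab⟩
      · rw [hlo, min_eq_right h]; exact hJI ⟨le_refl u, huv⟩
    · rcases le_total b v with h | h
      · rw [hhi, max_eq_right h]; exact hJI ⟨huv, le_refl v⟩
      · rw [hhi, max_eq_left h]; exact hΔI ⟨hab, le_refl b⟩
  obtain ⟨z, hz1, hz2⟩ := hmeet
  have hwidth : hi' - lo ≤ 2 * (v - u) := by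
    have h1 : hi' ≤ z + (v - u) :=
      max_le (by have := hz1.1; linarith) (by have := hz2.1; linarith)
    have h2 : z - (v - u) ≤ lo :=
      le_min (by have := hz1.2; linarith) (by have := hz2.2; linarith)
    linarith
  have hΔsub : Set.Icc a b ⊆ Set.Icc lo hi' :=
    Set.Icc_subset_Icc (min_le_left _ _) (le_max_left _ _)
  have hJsub : Set.Icc u v ⊆ Set.Icc lo hi' :=
    Set.Icc_subset_Icc (min_le_right _ _) (le_max_right _ _)
  have hdist : ∀ p ∈ Set.Icc lo hi', ∀ q ∈ Set.Icc lo hi', |p - q| ≤ 2 * (v - u) := by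
    intro p hp q hq
    rw [abs_sub_le_iff]
    constructor
    · have := hp.2; have := hq.1; linarith
    · have := hq.2; have := hp.1; linarith
  -- derivative of F_L' on W
  have hg : ∀ y ∈ Set.Icc lo hi',
      HasDerivWithinAt (fun t => (A:ℝ) - (B:ℝ) * f' t) (-((B:ℝ) * f'' y)) (Set.Icc lo hi') y := by
    intro y hy
    exact (((hf'' y (hW hy)).mono hW).const_mul (B:ℝ)).const_sub (A:ℝ)
  have hgbound : ∀ y ∈ Set.Icc lo hi',
      ‖-((B:ℝ) * f'' y)‖ ≤ C₀ * max |(A : ℝ)| |(B : ℝ)| := by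
    intro y hy
    rw [norm_neg, Real.norm_eq_abs, abs_mul]
    have h := (hbounds y (hW hy)).2.2.2
    calc |(B:ℝ)| * |f'' y| ≤ (max |(A : ℝ)| |(B : ℝ)|) * C₀ :=
          mul_le_mul (le_max_right _ _) h (abs_nonneg _) hMabs
      _ = C₀ * max |(A : ℝ)| |(B : ℝ)| := mul_comm _ _
  -- uniform bound for F_L' on W
  have hderiv : ∀ y ∈ Set.Icc lo hi',
      |(A : ℝ) - (B : ℝ) * f' y| ≤ 10 * C₀ * (v - u) * max |(A : ℝ)| |(B : ℝ)| := by
    intro y hy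
    have lip := Convex.norm_image_sub_le_of_norm_hasDerivWithin_le hg hgbound
      (convex_Icc lo hi') (hΔsub hx₀mem) hy
    rw [Real.norm_eq_abs, Real.norm_eq_abs] at lip
    have hd := hdist y hy x₀ (hΔsub hx₀mem)
    have h2 : C₀ * max |(A : ℝ)| |(B : ℝ)| * |y - x₀|
        ≤ C₀ * max |(A : ℝ)| |(B : ℝ)| * (2 * (v - u)) :=
      mul_le_mul_of_nonneg_left hd (by positivity)
    have h3 : |(A : ℝ) - (B : ℝ) * f' y|
        ≤ V + |((A:ℝ) - (B:ℝ) * f' y) - ((A:ℝ) - (B:ℝ) * f' x₀)| := by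
      have := abs_sub_abs_le_abs_sub ((A:ℝ) - (B:ℝ) * f' y) ((A:ℝ) - (B:ℝ) * f' x₀)
      rw [hx₀] at this
      linarith
    linarith [lip, hd, h2, h3, hVsmall]
  -- derivative of F_L on W
  have hFLd : ∀ y ∈ Set.Icc lo hi',
      HasDerivWithinAt (FL A B C f) ((A:ℝ) - (B:ℝ) * f' y) (Set.Icc lo hi') y := by
    intro y hy
    have h1 : HasDerivWithinAt (fun t : ℝ => (A:ℝ) * t) ((A:ℝ)) (Set.Icc lo hi') y := by
      simpa using (hasDerivWithinAt_id y (Set.Icc lo hi')).const_mul (A:ℝ)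
    have h2 : HasDerivWithinAt (fun t => (B:ℝ) * f t) ((B:ℝ) * f' y) (Set.Icc lo hi') y :=
      ((hf' y (hW hy)).mono hW).const_mul (B:ℝ)
    have h3 := (h1.sub h2).add_const (C:ℝ)
    unfold FL
    exact h3
  have hderiv' : ∀ y ∈ Set.Icc lo hi',
      ‖(A : ℝ) - (B : ℝ) * f' y‖ ≤ 10 * C₀ * (v - u) * max |(A : ℝ)| |(B : ℝ)| := by
    intro y hy
    rw [Real.norm_eq_abs]
    exact hderiv y hy
  intro x hx
  have hxW := hJsub hx
  refine ⟨hderiv x hxW, ?_⟩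
  have hx₁ : (a + b) / 2 ∈ Set.Icc a b := ⟨by linarith, by linarith⟩
  have lip := Convex.norm_image_sub_le_of_norm_hasDerivWithin_le hFLd hderiv'
    (convex_Icc lo hi') (hΔsub hx₁) hxW
  rw [Real.norm_eq_abs, Real.norm_eq_abs] at lip
  have hd := hdist x hxW ((a + b) / 2) (hΔsub hx₁)
  have h2 : 10 * C₀ * (v - u) * max |(A : ℝ)| |(B : ℝ)| * |x - (a + b) / 2|
      ≤ 10 * C₀ * (v - u) * max |(A : ℝ)| |(B : ℝ)| * (2 * (v - u)) :=
    mul_le_mul_of_nonneg_left hd (by positivity)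
  have h3 : |FL A B C f x| ≤ |FL A B C f ((a + b) / 2)|
      + |FL A B C f x - FL A B C f ((a + b) / 2)| := by
    have := abs_sub_abs_le_abs_sub (FL A B C f x) (FL A B C f ((a + b) / 2))
    linarith
  have h6 : (0:ℝ) ≤ C₀ * (v - u)^2 * max |(A : ℝ)| |(B : ℝ)| := by positivity
  linarith [lip, h2, h3, hF₁, hcM, h6]
end

section
/- Let n, k be integers with n ≥ 1, k ≥ 0, and let c₁' > 0 satisfy 1 ≤ C₀ c₁', R² c ≤ C₀ (c₁')², and c₁' ≥ 2K c^{1/2} 2^{−k} R. Let A, B, C be integers with B ≠ 0, and let Δ be a closed interval centered at a point x₁ with length |Δ| = 2K c^{1/2} / H, where H := ( max{|A|^{1/i}, |B|^{1/j}}·|B| )^{1/2}; suppose |F_L(x₁)| ≤ c / max{|A|^{1/i}, |B|^{1/j}}, that 2^k R^{n−1} ≤ H < 2^{k+1} R^{n−1}, and that V := min_{x∈Δ} |F'_L(x)| (attained at x₀ ∈ Δ) satisfies V ≤ R^{−n} max{|A|,|B|}. Let J ⊆ I be an interval of length |J| = c₁' R^{−n} with Δ ∩ J ≠ ∅. Then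 for every x ∈ J one has |F'_L(x)| ≤ 3 C₀ |J| max{|A|,|B|} and |F_L(x)| ≤ 9 C₀ |J|² max{|A|,|B|}. -/
set_option maxHeartbeats 1000000 in
/-- On any interval `J` of length `c₁'R^(−n)` (with `1 ≤ C₀c₁'` and `R²c ≤ C₀c₁'²`)
meeting a Type 2 interval `Δ`, one has `|F_L'(x)| ≤ 3C₀|J|max{|A|,|B|}` and
`|F_L(x)| ≤ 9C₀|J|²max{|A|,|B|}` for all `x ∈ J`. -/
theorem lemma_tp2vp
    (i j c₀ C₀ c K : ℝ) (R n k : ℕ)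
    (hi : 0 < i) (hij : i ≤ j) (hj : j < 1) (hsum : i + j = 1)
    (hc₀ : 0 < c₀) (hC₀ : c₀ ≤ C₀) (hc : 0 < c) (hR : 2 ≤ R)
    (hK : 1 ≤ K) (hn : 1 ≤ n)
    (I : Set ℝ) (hI : I.OrdConnected)
    (f f' f'' : ℝ → ℝ)
    (hf' : ∀ x ∈ I, HasDerivWithinAt f (f' x) I x)
    (hf'' : ∀ x ∈ I, HasDerivWithinAt f' (f'' x) I x)
    (hbounds : ∀ x ∈ I, c₀ ≤ |f' x| ∧ |f' x| ≤ C₀ ∧ c₀ ≤ |f'' x| ∧ |f'' x| ≤ C₀)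
    (A B C : ℤ) (hB : B ≠ 0)
    (c₁' : ℝ) (hc₁pos : 0 < c₁')
    (hc₁1 : 1 ≤ C₀ * c₁') (hc₁2 : (R : ℝ) ^ 2 * c ≤ C₀ * c₁' ^ 2)
    (hc₁3 : 2 * K * Real.sqrt c * (2 : ℝ) ^ (-(k : ℝ)) * (R : ℝ) ≤ c₁')
    (a b V H x₀ : ℝ) (hab : a ≤ b) (hΔI : Set.Icc a b ⊆ I)
    (hV : IsLeast ((fun x => |(A : ℝ) - (B : ℝ) * f' x|) '' Set.Icc a b) V)
    (hx₀mem : x₀ ∈ Set.Icc a b) (hx₀ : |(A : ℝ) - (B : ℝ) * f' x₀| = V)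
    (hH : H = Real.sqrt (Mnum i j A B * |(B : ℝ)|))
    (hlen : b - a = 2 * K * Real.sqrt c / H)
    (hF₁ : |FL A B C f ((a + b) / 2)| ≤ c / Mnum i j A B)
    (hHlow : (2 : ℝ) ^ (k : ℝ) * (R : ℝ) ^ ((n : ℝ) - 1) ≤ H)
    (hHup : H < (2 : ℝ) ^ ((k : ℝ) + 1) * (R : ℝ) ^ ((n : ℝ) - 1))
    (hVsmall : V ≤ (R : ℝ) ^ (-(n : ℝ)) * max |(A : ℝ)| |(B : ℝ)|)
    (u v : ℝ) (hJlen : v - u = c₁' * (R : ℝ) ^ (-(n : ℝ)))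
    (hJI : Set.Icc u v ⊆ I)
    (hmeet : (Set.Icc a b ∩ Set.Icc u v).Nonempty) :
    ∀ x ∈ Set.Icc u v,
      |(A : ℝ) - (B : ℝ) * f' x| ≤ 3 * C₀ * (v - u) * max |(A : ℝ)| |(B : ℝ)| ∧
      |FL A B C f x| ≤ 9 * C₀ * (v - u) ^ 2 * max |(A : ℝ)| |(B : ℝ)| := by
  have hC₀pos : (0:ℝ) < C₀ := lt_of_lt_of_le hc₀ hC₀
  have hj0 : (0:ℝ) < j := lt_of_lt_of_le hi hij
  have hB1 : (1:ℝ) ≤ |(B:ℝ)| := by exact_mod_cast Int.one_le_abs hB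
  have hRpos : (0:ℝ) < (R:ℝ) := by
    have : (0:ℕ) < R := lt_of_lt_of_le (by norm_num) hR
    exact_mod_cast this
  have hK0 : (0:ℝ) ≤ K := by linarith
  set Mx := max |(A:ℝ)| |(B:ℝ)| with hMxdef
  have hMx1 : (1:ℝ) ≤ Mx := le_trans hB1 (le_max_right _ _)
  have hBMx : |(B:ℝ)| ≤ Mx := le_max_right _ _
  set P : ℝ := (R:ℝ)^(-(n:ℝ)) with hPdef
  set Q : ℝ := (R:ℝ)^((n:ℝ)-1) with hQdef
  set T : ℝ := (R:ℝ)^((n:ℝ)) with hTdef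
  have hPpos : 0 < P := Real.rpow_pos_of_pos hRpos _
  have hQpos : 0 < Q := Real.rpow_pos_of_pos hRpos _
  have hTpos : 0 < T := Real.rpow_pos_of_pos hRpos _
  have hQT : Q = T / (R:ℝ) := by
    rw [hQdef, hTdef, Real.rpow_sub hRpos, Real.rpow_one]
  have hPT : P = T⁻¹ := by
    rw [hPdef, hTdef, Real.rpow_neg hRpos.le]
  have hRPQ : (R:ℝ) * P * Q = 1 := by
    rw [hPT, hQT]; field_simp
  have h2kpos : (0:ℝ) < (2:ℝ)^(k:ℝ) := Real.rpow_pos_of_pos (by norm_num) _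
  have hHpos : 0 < H := lt_of_lt_of_le (by positivity) hHlow
  have hvu : 0 < v - u := by rw [hJlen]; positivity
  -- |Δ| ≤ |J|
  have hnum0 : (0:ℝ) ≤ 2 * K * Real.sqrt c :=
    mul_nonneg (mul_nonneg (by norm_num) hK0) (Real.sqrt_nonneg c)
  have hΔJ : b - a ≤ v - u := by
    rw [hlen, hJlen]
    calc 2 * K * Real.sqrt c / H ≤ 2 * K * Real.sqrt c / ((2:ℝ)^(k:ℝ) * Q) := by
          gcongr
      _ = 2 * K * Real.sqrt c * (2:ℝ)^(-(k:ℝ)) * (R:ℝ) * P := by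
          rw [Real.rpow_neg (by norm_num : (0:ℝ) ≤ 2), hPT, hQT]
          field_simp
      _ ≤ c₁' * P := mul_le_mul_of_nonneg_right hc₁3 hPpos.le
  obtain ⟨y, hyΔ, hyJ⟩ := hmeet
  -- convexity of I
  have hconv : Convex ℝ I := hI.convex
  -- the derivative function
  set g : ℝ → ℝ := fun z => (A:ℝ) - (B:ℝ) * f' z with hgdef
  have hgderiv : ∀ z ∈ I, HasDerivWithinAt g (-((B:ℝ) * f'' z)) I z := by
    intro z hz
    have h := (hasDerivWithinAt_const z I (A:ℝ)).sub ((hf'' z hz).const_mul (B:ℝ))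
    rw [zero_sub] at h
    exact h
  have hgbnd : ∀ z ∈ I, ‖-((B:ℝ) * f'' z)‖ ≤ C₀ * |(B:ℝ)| := by
    intro z hz
    rw [Real.norm_eq_abs, abs_neg, abs_mul, mul_comm]
    exact mul_le_mul_of_nonneg_right (hbounds z hz).2.2.2 (abs_nonneg _)
  have hglip : ∀ z₁ ∈ I, ∀ z₂ ∈ I, |g z₁ - g z₂| ≤ C₀ * |(B:ℝ)| * |z₁ - z₂| := by
    intro z₁ h₁ z₂ h₂
    have := Convex.norm_image_sub_le_of_norm_hasDerivWithin_le hgderiv hgbnd hconv h₂ h₁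
    simpa [Real.norm_eq_abs] using this
  have hx₀I : x₀ ∈ I := hΔI hx₀mem
  -- distance bound for points of J
  have hdist : ∀ z ∈ Set.Icc u v, |z - x₀| ≤ 2*(v-u) := by
    intro z hz
    rw [abs_le]
    constructor <;>
      linarith only [hz.1, hz.2, hyΔ.1, hyΔ.2, hyJ.1, hyJ.2, hx₀mem.1, hx₀mem.2, hΔJ, hvu]
  -- main derivative bound
  have hgbound : ∀ z ∈ I, |z - x₀| ≤ 2*(v-u) → |g z| ≤ 3*C₀*(v-u)*Mx := by
    intro z hz hd
    have h1 : |g z| - |g x₀| ≤ |g z - g x₀| := abs_sub_abs_le_abs_sub _ _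
    have h2 := hglip z hz x₀ hx₀I
    have hgx₀V : |g x₀| = V := hx₀
    have h3 : V ≤ P * Mx := hVsmall
    have h4 : P ≤ C₀ * (v - u) := by
      have hP' : P = (v-u)/c₁' := by rw [hJlen]; field_simp
      rw [hP', div_le_iff₀ hc₁pos]
      linarith only [mul_le_mul_of_nonneg_right hc₁1 hvu.le]
    have t1 : C₀ * |(B:ℝ)| * |z - x₀| ≤ C₀ * |(B:ℝ)| * (2*(v-u)) :=
      mul_le_mul_of_nonneg_left hd (by positivity)
    have t2 : C₀ * |(B:ℝ)| * (2*(v-u)) ≤ C₀ * Mx * (2*(v-u)) :=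
      mul_le_mul_of_nonneg_right (mul_le_mul_of_nonneg_left hBMx hC₀pos.le) (by linarith only [hvu])
    have t3 : P * Mx ≤ C₀ * (v-u) * Mx :=
      mul_le_mul_of_nonneg_right h4 (by linarith only [hMx1])
    linarith only [h1, h2, t1, t2, t3, hgx₀V, h3]
  intro x hx
  have hxI : x ∈ I := hJI hx
  have hxdist := hdist x hx
  have hgx : |(A:ℝ) - (B:ℝ)*f' x| ≤ 3*C₀*(v-u)*Mx := hgbound x hxI hxdist
  refine ⟨hgx, ?_⟩
  -- second part
  set x₁ : ℝ := (a+b)/2 with hx₁def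
  have hx₁Δ : x₁ ∈ Set.Icc a b :=
    ⟨by rw [hx₁def]; linarith only [hab], by rw [hx₁def]; linarith only [hab]⟩
  have hx₁I : x₁ ∈ I := hΔI hx₁Δ
  have hx₁dist : |x₁ - x₀| ≤ v - u := by
    rw [abs_le]
    constructor <;> rw [hx₁def] <;> cases' hx₀mem with h1 h2 <;>
      linarith only [h1, h2, hab, hΔJ, hvu]
  set s : Set ℝ := Set.uIcc x₁ x with hsdef
  have hsI : s ⊆ I := hI.uIcc_subset hx₁I hxI
  have hFLd : ∀ z ∈ s, HasDerivWithinAt (FL A B C f) (g z) s z := by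
    intro z hz
    have h1 : HasDerivWithinAt f (f' z) s z := (hf' z (hsI hz)).mono hsI
    have h2 := (((hasDerivWithinAt_id z s).const_mul (A:ℝ)).sub
      (h1.const_mul (B:ℝ))).add_const (C:ℝ)
    unfold FL
    simpa [hgdef] using h2
  have hsbound : ∀ z ∈ s, ‖g z‖ ≤ 3*C₀*(v-u)*Mx := by
    intro z hz
    rw [Real.norm_eq_abs]
    apply hgbound z (hsI hz)
    have e1 := abs_le.mp hx₁dist
    have e2 := abs_le.mp hxdist
    rw [abs_le]
    rcases Set.mem_uIcc.mp hz with ⟨h1, h2⟩ | ⟨h1, h2⟩ <;> constructor <;>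
      linarith only [e1.1, e1.2, e2.1, e2.2, h1, h2, hvu]
  have hMVT := Convex.norm_image_sub_le_of_norm_hasDerivWithin_le hFLd hsbound
    (convex_uIcc x₁ x) (Set.left_mem_uIcc) (Set.right_mem_uIcc)
  have hMVT' : |FL A B C f x - FL A B C f x₁| ≤ 3*C₀*(v-u)*Mx * |x - x₁| := by
    simpa [Real.norm_eq_abs] using hMVT
  have hxx₁ : |x - x₁| ≤ 2*(v-u) := by
    rw [abs_le]
    constructor <;> rw [hx₁def] <;>
      linarith only [hx.1, hx.2, hyΔ.1, hyΔ.2, hyJ.1, hyJ.2, hΔJ, hab, hvu]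
  -- bound |FL x₁|
  have hM1 : (1:ℝ) ≤ Mnum i j A B := by
    have h := Real.rpow_le_rpow (by norm_num : (0:ℝ) ≤ 1) hB1 (by positivity : (0:ℝ) ≤ 1/j)
    rw [Real.one_rpow] at h
    exact le_trans h (le_max_right _ _)
  have hMpos : (0:ℝ) < Mnum i j A B := by linarith only [hM1]
  have hH2 : H^2 = Mnum i j A B * |(B:ℝ)| := by
    rw [hH, Real.sq_sqrt (by positivity)]
  have h2k1 : (1:ℝ) ≤ (2:ℝ)^(k:ℝ) := by
    have := Real.rpow_le_rpow_of_exponent_le (by norm_num : (1:ℝ) ≤ 2)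
      (by positivity : (0:ℝ) ≤ (k:ℝ))
    simpa using this
  have hQH : Q ≤ H := by
    refine le_trans ?_ hHlow
    calc Q = 1 * Q := (one_mul Q).symm
      _ ≤ (2:ℝ)^(k:ℝ) * Q := mul_le_mul_of_nonneg_right h2k1 hQpos.le
  have hQ2 : Q^2 ≤ Mnum i j A B * Mx := by
    have h1 : Q^2 ≤ H^2 := pow_le_pow_left₀ hQpos.le hQH 2
    rw [hH2] at h1
    linarith only [h1,
      mul_le_mul_of_nonneg_left hBMx (by linarith only [hM1] : (0:ℝ) ≤ Mnum i j A B)]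
  have hFLx₁ : |FL A B C f x₁| ≤ C₀ * (v-u)^2 * Mx := by
    refine le_trans hF₁ ?_
    rw [div_le_iff₀ hMpos]
    have hRPQ2 : ((R:ℝ)*P*Q)^2 = 1 := by rw [hRPQ]; norm_num
    have hvu2 : (v-u)^2 = c₁'^2 * P^2 := by rw [hJlen]; ring
    have hc' : c * (R:ℝ)^2 ≤ C₀ * c₁'^2 := by rw [mul_comm]; exact hc₁2
    calc c = c * ((R:ℝ)*P*Q)^2 := by rw [hRPQ2]; ring
      _ = (c * (R:ℝ)^2) * (P*Q)^2 := by ring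
      _ ≤ (C₀ * c₁'^2) * (P*Q)^2 := mul_le_mul_of_nonneg_right hc' (sq_nonneg _)
      _ = (C₀ * c₁'^2 * P^2) * Q^2 := by ring
      _ ≤ (C₀ * c₁'^2 * P^2) * (Mnum i j A B * Mx) :=
          mul_le_mul_of_nonneg_left hQ2 (by positivity)
      _ = C₀ * (v-u)^2 * Mx * Mnum i j A B := by rw [hvu2]; ring
  have habs : |FL A B C f x| - |FL A B C f x₁| ≤ |FL A B C f x - FL A B C f x₁| :=
    abs_sub_abs_le_abs_sub _ _
  have t : 3*C₀*(v-u)*Mx * |x - x₁| ≤ 3*C₀*(v-u)*Mx * (2*(v-u)) :=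
    mul_le_mul_of_nonneg_left hxx₁ (by positivity)
  have e : 3*C₀*(v-u)*Mx*(2*(v-u)) = 6*(C₀*(v-u)^2*Mx) := by ring
  have hnn : (0:ℝ) ≤ C₀*(v-u)^2*Mx := by positivity
  have egoal : 9 * C₀ * (v - u) ^ 2 * Mx = 9*(C₀*(v-u)^2*Mx) := by ring
  rw [egoal]
  linarith only [habs, hMVT', t, e, hFLx₁, hnn]
end

section
/- Let (A₁,B₁,C₁) and (A₂,B₂,C₂) be triples of integers with (A₁,B₁) ≠ (0,0) and (A₂,B₂) ≠ (0,0), defining two distinct parallel lines A_t x − B_t y + C_t = 0 (so A₁B₂ = A₂B₁ but the two solution sets differ). Suppose |A₂| ≤ |A₁| and |B₂| ≤ |B₁|. Then for every (x,y) ∈ ℝ²: |A₁x − B₁y + C₁| + |A₂x − B₂y + C₂| ≥ 1 / min{|A₁|, |B₁|}. -/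
/-- If the coefficient triples are proportional (via nonzero integers `t₁, t₂`),
the two lines coincide as subsets of the plane. -/
lemma lines_eq_of_prop (A₁ B₁ C₁ A₂ B₂ C₂ t₁ t₂ : ℤ) (ht₁ : t₁ ≠ 0) (ht₂ : t₂ ≠ 0)
    (hA : t₁ * A₂ = t₂ * A₁) (hB : t₁ * B₂ = t₂ * B₁) (hC : t₁ * C₂ = t₂ * C₁) :
    {p : ℝ × ℝ | (A₁ : ℝ) * p.1 - (B₁ : ℝ) * p.2 + (C₁ : ℝ) = 0} =
    {p : ℝ × ℝ | (A₂ : ℝ) * p.1 - (B₂ : ℝ) * p.2 + (C₂ : ℝ) = 0} := by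
  have hA' : (t₁ : ℝ) * A₂ = (t₂ : ℝ) * A₁ := by exact_mod_cast hA
  have hB' : (t₁ : ℝ) * B₂ = (t₂ : ℝ) * B₁ := by exact_mod_cast hB
  have hC' : (t₁ : ℝ) * C₂ = (t₂ : ℝ) * C₁ := by exact_mod_cast hC
  have ht₁' : (t₁ : ℝ) ≠ 0 := Int.cast_ne_zero.mpr ht₁
  have ht₂' : (t₂ : ℝ) ≠ 0 := Int.cast_ne_zero.mpr ht₂
  ext ⟨x, y⟩
  simp only [Set.mem_setOf_eq]
  have key : (t₁ : ℝ) * ((A₂ : ℝ) * x - (B₂ : ℝ) * y + (C₂ : ℝ)) =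
      (t₂ : ℝ) * ((A₁ : ℝ) * x - (B₁ : ℝ) * y + (C₁ : ℝ)) := by
    linear_combination x * hA' - y * hB' + hC'
  constructor
  · intro h
    have : (t₁ : ℝ) * ((A₂ : ℝ) * x - (B₂ : ℝ) * y + (C₂ : ℝ)) = 0 := by
      rw [key, h, mul_zero]
    exact (mul_eq_zero.mp this).resolve_left ht₁'
  · intro h
    have : (t₂ : ℝ) * ((A₁ : ℝ) * x - (B₁ : ℝ) * y + (C₁ : ℝ)) = 0 := by
      rw [← key, h, mul_zero]
    exact (mul_eq_zero.mp this).resolve_left ht₂'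

/-- For two distinct parallel integer lines `A_t x − B_t y + C_t = 0` with
`|A₂| ≤ |A₁|` and `|B₂| ≤ |B₁|`, the sum of the two linear forms at any point of the
plane is at least `1 / min{|A₁|, |B₁|}`. -/
theorem parallel_lines_bound
    (A₁ B₁ C₁ A₂ B₂ C₂ : ℤ)
    (h1 : ¬(A₁ = 0 ∧ B₁ = 0)) (h2 : ¬(A₂ = 0 ∧ B₂ = 0))
    (hpar : A₁ * B₂ = A₂ * B₁)
    (hdist : {p : ℝ × ℝ | (A₁ : ℝ) * p.1 - (B₁ : ℝ) * p.2 + (C₁ : ℝ) = 0} ≠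
             {p : ℝ × ℝ | (A₂ : ℝ) * p.1 - (B₂ : ℝ) * p.2 + (C₂ : ℝ) = 0})
    (hA : |A₂| ≤ |A₁|) (hB : |B₂| ≤ |B₁|) :
    ∀ x y : ℝ,
      1 / min |(A₁ : ℝ)| |(B₁ : ℝ)| ≤
        |(A₁ : ℝ) * x - (B₁ : ℝ) * y + (C₁ : ℝ)| +
        |(A₂ : ℝ) * x - (B₂ : ℝ) * y + (C₂ : ℝ)| := by
  intro x y
  set f₁ : ℝ := (A₁ : ℝ) * x - (B₁ : ℝ) * y + (C₁ : ℝ) with hf₁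
  set f₂ : ℝ := (A₂ : ℝ) * x - (B₂ : ℝ) * y + (C₂ : ℝ) with hf₂
  rcases eq_or_ne A₁ 0 with hA1 | hA1
  · have : min |(A₁ : ℝ)| |(B₁ : ℝ)| = 0 := by
      rw [hA1]; simp
    rw [this, div_zero]
    positivity
  rcases eq_or_ne B₁ 0 with hB1 | hB1
  · have : min |(A₁ : ℝ)| |(B₁ : ℝ)| = 0 := by
      rw [hB1]; simp
    rw [this, div_zero]
    positivity
  have hA1' : (A₁ : ℝ) ≠ 0 := Int.cast_ne_zero.mpr hA1
  have hB1' : (B₁ : ℝ) ≠ 0 := Int.cast_ne_zero.mpr hB1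
  have hpar' : (A₁ : ℝ) * B₂ = (A₂ : ℝ) * B₁ := by exact_mod_cast hpar
  have hsumnn : 0 ≤ |f₁| + |f₂| := by positivity
  rcases le_total |(A₁ : ℝ)| |(B₁ : ℝ)| with hle | hle
  · -- min = |A₁|
    rw [min_eq_left hle]
    -- D = A₁C₂ - A₂C₁ ≠ 0
    have hD : A₁ * C₂ - A₂ * C₁ ≠ 0 := by
      intro h
      have hA2 : A₂ ≠ 0 := by
        intro hA2
        have : B₂ = 0 := by
          have := hpar
          rw [hA2, zero_mul] at this
          exact (mul_eq_zero.mp this).resolve_left hA1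
        exact h2 ⟨hA2, this⟩
      exact hdist (lines_eq_of_prop A₁ B₁ C₁ A₂ B₂ C₂ A₁ A₂ hA1 hA2 (by ring)
        (by linarith [hpar]) (by linarith [h]))
    have h1le : (1 : ℝ) ≤ |((A₁ * C₂ - A₂ * C₁ : ℤ) : ℝ)| := by
      rw [← Int.cast_abs]
      exact_mod_cast Int.one_le_abs (by exact_mod_cast hD)
    have hkey : ((A₁ * C₂ - A₂ * C₁ : ℤ) : ℝ) = (A₁ : ℝ) * f₂ - (A₂ : ℝ) * f₁ := by
      push_cast
      rw [hf₁, hf₂]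
      linear_combination y * hpar'
    have habs : |((A₁ * C₂ - A₂ * C₁ : ℤ) : ℝ)| ≤ |(A₁ : ℝ)| * (|f₁| + |f₂|) := by
      rw [hkey]
      calc |(A₁ : ℝ) * f₂ - (A₂ : ℝ) * f₁| ≤ |(A₁ : ℝ) * f₂| + |(A₂ : ℝ) * f₁| :=
            abs_sub _ _
        _ = |(A₁ : ℝ)| * |f₂| + |(A₂ : ℝ)| * |f₁| := by rw [abs_mul, abs_mul]
        _ ≤ |(A₁ : ℝ)| * |f₂| + |(A₁ : ℝ)| * |f₁| := by
            have : |(A₂ : ℝ)| ≤ |(A₁ : ℝ)| := by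
              rw [← Int.cast_abs, ← Int.cast_abs]; exact_mod_cast hA
            nlinarith [abs_nonneg f₁]
        _ = |(A₁ : ℝ)| * (|f₁| + |f₂|) := by ring
    rw [div_le_iff₀ (by positivity : (0:ℝ) < |(A₁ : ℝ)|)]
    nlinarith
  · -- min = |B₁|
    rw [min_eq_right hle]
    have hD : B₁ * C₂ - B₂ * C₁ ≠ 0 := by
      intro h
      have hB2 : B₂ ≠ 0 := by
        intro hB2
        have : A₂ = 0 := by
          have := hpar
          rw [hB2, mul_zero] at this
          exact (mul_eq_zero.mp this.symm).resolve_right hB1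
        exact h2 ⟨this, hB2⟩
      exact hdist (lines_eq_of_prop A₁ B₁ C₁ A₂ B₂ C₂ B₁ B₂ hB1 hB2
        (by linarith [hpar]) (by ring) (by linarith [h]))
    have h1le : (1 : ℝ) ≤ |((B₁ * C₂ - B₂ * C₁ : ℤ) : ℝ)| := by
      rw [← Int.cast_abs]
      exact_mod_cast Int.one_le_abs (by exact_mod_cast hD)
    have hkey : ((B₁ * C₂ - B₂ * C₁ : ℤ) : ℝ) = (B₁ : ℝ) * f₂ - (B₂ : ℝ) * f₁ := by
      push_cast
      rw [hf₁, hf₂]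
      linear_combination x * hpar'
    have habs : |((B₁ * C₂ - B₂ * C₁ : ℤ) : ℝ)| ≤ |(B₁ : ℝ)| * (|f₁| + |f₂|) := by
      rw [hkey]
      calc |(B₁ : ℝ) * f₂ - (B₂ : ℝ) * f₁| ≤ |(B₁ : ℝ) * f₂| + |(B₂ : ℝ) * f₁| :=
            abs_sub _ _
        _ = |(B₁ : ℝ)| * |f₂| + |(B₂ : ℝ)| * |f₁| := by rw [abs_mul, abs_mul]
        _ ≤ |(B₁ : ℝ)| * |f₂| + |(B₁ : ℝ)| * |f₁| := by
            have : |(B₂ : ℝ)| ≤ |(B₁ : ℝ)| := by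
              rw [← Int.cast_abs, ← Int.cast_abs]; exact_mod_cast hB
            nlinarith [abs_nonneg f₁]
        _ = |(B₁ : ℝ)| * (|f₁| + |f₂|) := by ring
    rw [div_le_iff₀ (by positivity : (0:ℝ) < |(B₁ : ℝ)|)]
    nlinarith
end

section
/- Let p, r be integers, q a positive integer, and let i, j ≥ 0 be real numbers with i + j = 1. Then there exists a triple of integers (A₀, B₀, C₀) with (A₀, B₀) ≠ (0,0) such that A₀p − B₀r + C₀q = 0, |A₀| ≤ q^i and |B₀| ≤ q^j. Moreover, for any c > 0 and any (x, y) ∈ ℝ² with |x − p/q| ≤ (c/2)·q^{−1−i} and |y − r/q| ≤ (c/2)·q^{−1−j}, this triple satisfies |A₀x − B₀y + C₀| ≤ c·q^{−1}. -/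
open Real

/-- (Minkowski) Through any rational point `(p/q, r/q)` there is an integer line
`A₀x − B₀y + C₀ = 0` with `(A₀,B₀) ≠ (0,0)`, `|A₀| ≤ q^i`, `|B₀| ≤ q^j`; moreover any
point within `(c/2)q^(−1−i) × (c/2)q^(−1−j)` of `(p/q, r/q)` satisfies
`|A₀x − B₀y + C₀| ≤ c/q`. -/
theorem minkowski_line_through_rational_point
    (p r : ℤ) (q : ℕ) (hq : 0 < q) (i j : ℝ) (hi : 0 ≤ i) (hj : 0 ≤ j)
    (hij : i + j = 1) :
    ∃ A₀ B₀ C₀ : ℤ, ¬(A₀ = 0 ∧ B₀ = 0) ∧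
      A₀ * p - B₀ * r + C₀ * (q : ℤ) = 0 ∧
      |(A₀ : ℝ)| ≤ (q : ℝ) ^ i ∧ |(B₀ : ℝ)| ≤ (q : ℝ) ^ j ∧
      ∀ c : ℝ, 0 < c → ∀ x y : ℝ,
        |x - (p : ℝ) / (q : ℝ)| ≤ c / 2 * (q : ℝ) ^ (-1 - i) →
        |y - (r : ℝ) / (q : ℝ)| ≤ c / 2 * (q : ℝ) ^ (-1 - j) →
        |(A₀ : ℝ) * x - (B₀ : ℝ) * y + (C₀ : ℝ)| ≤ c / (q : ℝ) := by
  have hq0 : (0:ℝ) < q := by exact_mod_cast hq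
  have hqi : (0:ℝ) ≤ (q:ℝ) ^ i := rpow_nonneg hq0.le i
  have hqj : (0:ℝ) ≤ (q:ℝ) ^ j := rpow_nonneg hq0.le j
  set m := ⌊(q:ℝ) ^ i⌋₊ with hm
  set n := ⌊(q:ℝ) ^ j⌋₊ with hn
  have hmle : (m:ℝ) ≤ (q:ℝ) ^ i := Nat.floor_le hqi
  have hnle : (n:ℝ) ≤ (q:ℝ) ^ j := Nat.floor_le hqj
  have hcard : q < (m+1) * (n+1) := by
    have h1 : (q:ℝ) ^ i < m + 1 := Nat.lt_floor_add_one _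
    have h2 : (q:ℝ) ^ j < n + 1 := Nat.lt_floor_add_one _
    have h3 : (q:ℝ) < ((m+1) * (n+1) : ℕ) := by
      have : (q:ℝ) = (q:ℝ) ^ i * (q:ℝ) ^ j := by
        rw [← rpow_add hq0, hij, rpow_one]
      rw [this]
      push_cast
      exact mul_lt_mul'' h1 h2 hqi hqj
    exact_mod_cast h3
  haveI : NeZero q := ⟨hq.ne'⟩
  have hpig : ∃ a b : Fin (m+1) × Fin (n+1), a ≠ b ∧
      (((a.1.1 : ℤ) * p - (a.2.1 : ℤ) * r : ℤ) : ZMod q) =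
      (((b.1.1 : ℤ) * p - (b.2.1 : ℤ) * r : ℤ) : ZMod q) := by
    apply Fintype.exists_ne_map_eq_of_card_lt
    simpa [ZMod.card] using hcard
  obtain ⟨a, b, hab, hfab⟩ := hpig
  set A : ℤ := (a.1.1 : ℤ) - (b.1.1 : ℤ) with hA
  set B : ℤ := (a.2.1 : ℤ) - (b.2.1 : ℤ) with hB
  have hdvd : (q:ℤ) ∣ A * p - B * r := by
    have : ((A * p - B * r : ℤ) : ZMod q) = 0 := by
      push_cast [hA, hB]
      push_cast at hfab
      ring_nf
      ring_nf at hfab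
      linear_combination hfab
    exact (ZMod.intCast_zmod_eq_zero_iff_dvd _ _).mp this
  refine ⟨A, B, -((A * p - B * r) / q), ?_, ?_, ?_, ?_, ?_⟩
  · rintro ⟨hA0, hB0⟩
    apply hab
    have h1 : a.1 = b.1 := Fin.ext (by omega)
    have h2 : a.2 = b.2 := Fin.ext (by omega)
    exact Prod.ext h1 h2
  · have := Int.ediv_mul_cancel hdvd
    linarith [this]
  · have h1 : |A| ≤ (m : ℤ) := by
      have := a.1.isLt; have := b.1.isLt
      rw [abs_le]; omega
    calc |(A:ℝ)| = (|A| : ℤ) := by rw [← Int.cast_abs]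
    _ ≤ (m : ℝ) := by exact_mod_cast h1
    _ ≤ _ := hmle
  · have h1 : |B| ≤ (n : ℤ) := by
      have := a.2.isLt; have := b.2.isLt
      rw [abs_le]; omega
    calc |(B:ℝ)| = (|B| : ℤ) := by rw [← Int.cast_abs]
    _ ≤ (n : ℝ) := by exact_mod_cast h1
    _ ≤ _ := hnle
  · intro c hc x y hx hy
    set C : ℤ := -((A * p - B * r) / q) with hC
    have hlin : A * p - B * r + C * q = 0 := by
      have := Int.ediv_mul_cancel hdvd
      simp only [hC]; linarith [this]
    have hlinR : (A:ℝ) * p - (B:ℝ) * r + (C:ℝ) * q = 0 := by exact_mod_cast hlin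
    have heq : (A:ℝ) * x - (B:ℝ) * y + (C:ℝ)
        = (A:ℝ) * (x - p / q) - (B:ℝ) * (y - r / q) := by
      field_simp
      linear_combination hlinR
    have hAb : |(A:ℝ)| ≤ (q:ℝ) ^ i := by
      have h1 : |A| ≤ (m : ℤ) := by
        have := a.1.isLt; have := b.1.isLt
        rw [abs_le]; omega
      calc |(A:ℝ)| = (|A| : ℤ) := by rw [← Int.cast_abs]
      _ ≤ (m : ℝ) := by exact_mod_cast h1
      _ ≤ _ := hmle
    have hBb : |(B:ℝ)| ≤ (q:ℝ) ^ j := by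
      have h1 : |B| ≤ (n : ℤ) := by
        have := a.2.isLt; have := b.2.isLt
        rw [abs_le]; omega
      calc |(B:ℝ)| = (|B| : ℤ) := by rw [← Int.cast_abs]
      _ ≤ (n : ℝ) := by exact_mod_cast h1
      _ ≤ _ := hnle
    rw [heq]
    have t1 : |(A:ℝ) * (x - p / q)| ≤ (q:ℝ)^i * (c / 2 * (q:ℝ)^(-1-i)) := by
      rw [abs_mul]
      exact mul_le_mul hAb hx (abs_nonneg _) hqi
    have t2 : |(B:ℝ) * (y - r / q)| ≤ (q:ℝ)^j * (c / 2 * (q:ℝ)^(-1-j)) := by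
      rw [abs_mul]
      exact mul_le_mul hBb hy (abs_nonneg _) hqj
    have key1 : (q:ℝ)^i * (q:ℝ)^(-1-i) = (q:ℝ)⁻¹ := by
      rw [← rpow_add hq0]; ring_nf; rw [rpow_neg_one]
    have key2 : (q:ℝ)^j * (q:ℝ)^(-1-j) = (q:ℝ)⁻¹ := by
      rw [← rpow_add hq0]; ring_nf; rw [rpow_neg_one]
    calc |(A:ℝ) * (x - p / q) - (B:ℝ) * (y - r / q)|
        ≤ |(A:ℝ) * (x - p / q)| + |(B:ℝ) * (y - r / q)| := abs_sub _ _
    _ ≤ (q:ℝ)^i * (c / 2 * (q:ℝ)^(-1-i)) + (q:ℝ)^j * (c / 2 * (q:ℝ)^(-1-j)) := by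
        linarith
    _ = c / q := by
        have e1 : (q:ℝ)^i * (c / 2 * (q:ℝ)^(-1-i)) = c / 2 * ((q:ℝ)^i * (q:ℝ)^(-1-i)) := by ring
        have e2 : (q:ℝ)^j * (c / 2 * (q:ℝ)^(-1-j)) = c / 2 * ((q:ℝ)^j * (q:ℝ)^(-1-j)) := by ring
        rw [e1, e2, key1, key2]; field_simp; ring
end

section
/- Let f be differentiable on an interval I ⊆ ℝ, and let L₁(A₁,B₁,C₁), L₂(A₂,B₂,C₂) be two lines with real coefficients such that D := A₁B₂ − A₂B₁ ≠ 0; let P = (x_P, y_P) be their unique point of intersection. Define F_{L_t}(x) := A_t x − B_t f(x) + C_t. Suppose x₁, x₂ ∈ I satisfy |F_{L₁}(x₁)| ≤ η₁ and |F_{L₂}(x₂)| ≤ η₂, and that |A₂ − B₂ f'(x)| ≤ W for every x between x₁ and x₂. Then |x₁ − x_P| ≤ ( |B₁|·(η₂ + |x₁ − x₂|·W) + |B₂|·η₁ ) / |D| and |f(x₁) − y_P| ≤ ( |A₁|·(η₂ + |x₁ − x₂|·W) + |A₂|·η₁ ) / |D|. -/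
/-- Bounds for the distance between a point `(x₁, f(x₁))` on a curve and the
intersection point `P` of two non-parallel lines, in terms of `|F_{L₁}(x₁)|`,
`|F_{L₂}(x₂)|` and a bound `W` on `|A₂ − B₂ f'|` between `x₁` and `x₂`. -/
theorem distance_to_intersection_point
    (I : Set ℝ) (hI : I.OrdConnected)
    (f f' : ℝ → ℝ) (hf : ∀ x ∈ I, HasDerivWithinAt f (f' x) I x)
    (A₁ B₁ C₁ A₂ B₂ C₂ : ℝ) (hD : A₁ * B₂ - A₂ * B₁ ≠ 0)
    (xP yP : ℝ)
    (hP1 : A₁ * xP - B₁ * yP + C₁ = 0) (hP2 : A₂ * xP - B₂ * yP + C₂ = 0)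
    (x₁ x₂ : ℝ) (hx₁ : x₁ ∈ I) (hx₂ : x₂ ∈ I)
    (η₁ η₂ W : ℝ)
    (hF1 : |A₁ * x₁ - B₁ * f x₁ + C₁| ≤ η₁)
    (hF2 : |A₂ * x₂ - B₂ * f x₂ + C₂| ≤ η₂)
    (hW : ∀ x ∈ Set.uIcc x₁ x₂, |A₂ - B₂ * f' x| ≤ W) :
    |x₁ - xP| ≤ (|B₁| * (η₂ + |x₁ - x₂| * W) + |B₂| * η₁) / |A₁ * B₂ - A₂ * B₁| ∧
    |f x₁ - yP| ≤ (|A₁| * (η₂ + |x₁ - x₂| * W) + |A₂| * η₁) / |A₁ * B₂ - A₂ * B₁| := by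
  have hsub : Set.uIcc x₁ x₂ ⊆ I := by
    rw [Set.uIcc_eq_union]
    exact Set.union_subset (hI.out hx₁ hx₂) (hI.out hx₂ hx₁)
  -- g(x) = A₂ x - B₂ f x + C₂
  set g : ℝ → ℝ := fun x => A₂ * x - B₂ * f x + C₂ with hg
  have hg' : ∀ x ∈ Set.uIcc x₁ x₂,
      HasDerivWithinAt g (A₂ - B₂ * f' x) (Set.uIcc x₁ x₂) x := by
    intro x hx
    have := ((hf x (hsub hx)).mono hsub)
    simpa [hg] using (((hasDerivWithinAt_id x _).const_mul A₂).sub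
      (this.const_mul B₂)).add_const C₂
  have hmvt : |g x₁ - g x₂| ≤ W * |x₁ - x₂| := by
    have := Convex.norm_image_sub_le_of_norm_hasDerivWithin_le
      (f := g) (f' := fun x => A₂ - B₂ * f' x) (C := W)
      hg' (fun x hx => by simpa using hW x hx)
      (convex_uIcc x₁ x₂) Set.right_mem_uIcc Set.left_mem_uIcc
    simpa [Real.norm_eq_abs] using this
  have hF2' : |A₂ * x₁ - B₂ * f x₁ + C₂| ≤ η₂ + |x₁ - x₂| * W := by
    have : |g x₁| ≤ |g x₂| + |g x₁ - g x₂| := by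
      calc |g x₁| = |g x₂ + (g x₁ - g x₂)| := by ring_nf
        _ ≤ |g x₂| + |g x₁ - g x₂| := abs_add_le _ _
    calc |A₂ * x₁ - B₂ * f x₁ + C₂| = |g x₁| := rfl
      _ ≤ |g x₂| + |g x₁ - g x₂| := this
      _ ≤ η₂ + W * |x₁ - x₂| := add_le_add hF2 hmvt
      _ = η₂ + |x₁ - x₂| * W := by ring
  have hDpos : 0 < |A₁ * B₂ - A₂ * B₁| := abs_pos.mpr hD
  constructor
  · rw [le_div_iff₀ hDpos]
    have key : (x₁ - xP) * (A₁ * B₂ - A₂ * B₁)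
        = B₂ * (A₁ * x₁ - B₁ * f x₁ + C₁) - B₁ * (A₂ * x₁ - B₂ * f x₁ + C₂) := by
      linear_combination (x₁ - xP) * (A₁ * B₂ - A₂ * B₁) - B₂ * hP1 + B₁ * hP2
    calc |x₁ - xP| * |A₁ * B₂ - A₂ * B₁|
        = |B₂ * (A₁ * x₁ - B₁ * f x₁ + C₁) - B₁ * (A₂ * x₁ - B₂ * f x₁ + C₂)| := by
          rw [← abs_mul, key]
      _ ≤ |B₂| * |A₁ * x₁ - B₁ * f x₁ + C₁| + |B₁| * |A₂ * x₁ - B₂ * f x₁ + C₂| := by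
          exact (abs_sub _ _).trans_eq (by rw [abs_mul, abs_mul])
      _ ≤ |B₂| * η₁ + |B₁| * (η₂ + |x₁ - x₂| * W) := by
          gcongr <;> positivity
      _ = |B₁| * (η₂ + |x₁ - x₂| * W) + |B₂| * η₁ := by ring
  · rw [le_div_iff₀ hDpos]
    have key : (f x₁ - yP) * (A₁ * B₂ - A₂ * B₁)
        = A₂ * (A₁ * x₁ - B₁ * f x₁ + C₁) - A₁ * (A₂ * x₁ - B₂ * f x₁ + C₂) := by
      linear_combination (f x₁ - yP) * (A₁ * B₂ - A₂ * B₁) - A₂ * hP1 + A₁ * hP2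
    calc |f x₁ - yP| * |A₁ * B₂ - A₂ * B₁|
        = |A₂ * (A₁ * x₁ - B₁ * f x₁ + C₁) - A₁ * (A₂ * x₁ - B₂ * f x₁ + C₂)| := by
          rw [← abs_mul, key]
      _ ≤ |A₂| * |A₁ * x₁ - B₁ * f x₁ + C₁| + |A₁| * |A₂ * x₁ - B₂ * f x₁ + C₂| := by
          exact (abs_sub _ _).trans_eq (by rw [abs_mul, abs_mul])
      _ ≤ |A₂| * η₁ + |A₁| * (η₂ + |x₁ - x₂| * W) := by
          gcongr <;> positivity
      _ = |A₁| * (η₂ + |x₁ - x₂| * W) + |A₂| * η₁ := by ring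
end

section
/- Let f : I → ℝ be differentiable on an interval I with 0 < c₀ ≤ |f'(x)| ≤ C₀ for all x ∈ I. Let R ≥ 4 be an integer, n ≥ 1 an integer, c > 0, and set c₁ := 2cR²/c₀; assume 2C₀c₁ ≤ 1. For a rational number p/q in lowest terms with q ≥ 1, define Δ(p/q) := {x ∈ I : |f(x) − p/q| ≤ c/q²}. Let J ⊆ I be an interval of length c₁R^{−n}, subdivided into R closed subintervals of equal length c₁R^{−(n+1)}. Then at most 3 of these R subintervals intersect the union of the sets Δ(p/q) taken over all rationals p/q with R^{n−1} ≤ q² < R^n. -/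
/-- Auxiliary combinatorial lemma: if any two indices in `S` differ by at most `2`,
then `S` has at most `3` elements. -/
lemma aux_card_three (N : ℕ) (S : Set (Fin N))
    (h : ∀ t ∈ S, ∀ s ∈ S, (t : ℕ) ≤ (s : ℕ) + 2) : S.ncard ≤ 3 := by
  rcases Set.eq_empty_or_nonempty S with rfl | ⟨t₀, ht₀⟩
  · simp
  · have hmem : sInf (Fin.val '' S) ∈ Fin.val '' S :=
      Nat.sInf_mem ⟨t₀.val, ⟨t₀, ht₀, rfl⟩⟩
    set m := sInf (Fin.val '' S) with hm
    obtain ⟨t₁, ht₁, ht₁v⟩ := hmem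
    have hsub2 : Fin.val '' S ⊆ Set.Icc m (m + 2) := by
      rintro k ⟨t, htS, rfl⟩
      refine ⟨Nat.sInf_le ⟨t, htS, rfl⟩, ?_⟩
      have h1 := h t htS t₁ ht₁
      have h2 : m ≤ t₁.val := Nat.sInf_le ⟨t₁, ht₁, rfl⟩
      omega
    calc S.ncard = (Fin.val '' S).ncard :=
          (Set.ncard_image_of_injective S Fin.val_injective).symm
      _ ≤ (Set.Icc m (m + 2)).ncard := Set.ncard_le_ncard hsub2 (Set.finite_Icc _ _)
      _ = (Finset.Icc m (m + 2) : Set ℕ).ncard := by rw [Finset.coe_Icc]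
      _ = (Finset.Icc m (m + 2)).card := Set.ncard_coe_finset _
      _ ≤ 3 := by rw [Nat.card_Icc]; omega

set_option maxHeartbeats 1000000 in
/-- Subdividing an interval `J ⊆ I` of length `c₁R^(−n)` into `R` closed subintervals
of equal length `c₁R^(−(n+1))`, at most `3` of them meet the union of the sets
`Δ(p/q) = {x ∈ I : |f(x) − p/q| ≤ c/q²}` over rationals `p/q` (in lowest terms) with
`R^(n−1) ≤ q² < R^n`. -/
theorem at_most_three_removed_subintervals
    (I : Set ℝ) (hI : I.OrdConnected)
    (f f' : ℝ → ℝ) (hf : ∀ x ∈ I, HasDerivWithinAt f (f' x) I x)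
    (c₀ C₀ : ℝ) (hc₀ : 0 < c₀)
    (hb : ∀ x ∈ I, c₀ ≤ |f' x| ∧ |f' x| ≤ C₀)
    (R : ℕ) (hR : 4 ≤ R) (n : ℕ) (hn : 1 ≤ n)
    (c c₁ : ℝ) (hc : 0 < c) (hc₁ : c₁ = 2 * c * (R : ℝ) ^ 2 / c₀)
    (hsmall : 2 * C₀ * c₁ ≤ 1)
    (a b : ℝ) (hab : b - a = c₁ * (R : ℝ) ^ (-(n : ℝ)))
    (hJ : Set.Icc a b ⊆ I) :
    Set.ncard {t : Fin R |
      ∃ x ∈ Set.Icc (a + (t : ℝ) * (c₁ * (R : ℝ) ^ (-((n : ℝ) + 1))))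
                    (a + ((t : ℝ) + 1) * (c₁ * (R : ℝ) ^ (-((n : ℝ) + 1)))),
        x ∈ I ∧ ∃ (p : ℤ) (q : ℕ), 0 < q ∧ Int.gcd p (q : ℤ) = 1 ∧
          (R : ℝ) ^ ((n : ℝ) - 1) ≤ (q : ℝ) ^ 2 ∧ (q : ℝ) ^ 2 < (R : ℝ) ^ (n : ℝ) ∧
          |f x - (p : ℝ) / (q : ℝ)| ≤ c / (q : ℝ) ^ 2} ≤ 3 := by
  have hρ4 : (4 : ℝ) ≤ (R : ℝ) := by exact_mod_cast hR
  have hρ0 : (0 : ℝ) < (R : ℝ) := by linarith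
  set ℓ : ℝ := c₁ * (R : ℝ) ^ (-((n : ℝ) + 1)) with hℓdef
  have hc₁0 : 0 < c₁ := by rw [hc₁]; positivity
  have hℓ0 : 0 < ℓ := by rw [hℓdef]; positivity
  have hpow1 : (R : ℝ) ^ (-((n : ℝ) + 1)) * (R : ℝ) = (R : ℝ) ^ (-(n : ℝ)) := by
    rw [← Real.rpow_add_one hρ0.ne']
    congr 1; ring
  have hpow2 : (R : ℝ) ^ ((n : ℝ) - 1) * (R : ℝ) = (R : ℝ) ^ (n : ℝ) := by
    rw [← Real.rpow_add_one hρ0.ne']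
    congr 1; ring
  have hpown : 0 < (R : ℝ) ^ (n : ℝ) := Real.rpow_pos_of_pos hρ0 _
  have hρn' : 0 < (R : ℝ) ^ (-(n : ℝ)) := Real.rpow_pos_of_pos hρ0 _
  have hpowneg : (R : ℝ) ^ (-(n : ℝ)) = ((R : ℝ) ^ (n : ℝ))⁻¹ := Real.rpow_neg hρ0.le _
  have hRℓ : (R : ℝ) * ℓ = b - a := by
    rw [hab, hℓdef, ← hpow1]; ring
  have hba : 0 < b - a := by rw [hab]; positivity
  have haI : a ∈ I := hJ ⟨le_refl a, by linarith⟩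
  have hC₀ : c₀ ≤ C₀ := le_trans (hb a haI).1 (hb a haI).2
  -- subintervals are contained in [a, b]
  have hsub : ∀ t : Fin R, ∀ x ∈ Set.Icc (a + (t : ℝ) * ℓ) (a + ((t : ℝ) + 1) * ℓ),
      x ∈ Set.Icc a b := by
    intro t x hx
    have ht1 : ((t : ℕ) : ℝ) + 1 ≤ (R : ℝ) := by
      have := t.isLt
      exact_mod_cast Nat.succ_le_of_lt this
    have htpos : (0 : ℝ) ≤ ((t : ℕ) : ℝ) := Nat.cast_nonneg _
    constructor
    · have h0 : 0 ≤ ((t : ℕ) : ℝ) * ℓ := mul_nonneg htpos hℓ0.le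
      have := hx.1; linarith
    · have h2 : (((t : ℕ) : ℝ) + 1) * ℓ ≤ (R : ℝ) * ℓ :=
        mul_le_mul_of_nonneg_right ht1 hℓ0.le
      have := hx.2; linarith [hRℓ]
  -- Mean value theorem bounds
  have mvt : ∀ x ∈ I, ∀ y ∈ I, x ≤ y →
      c₀ * (y - x) ≤ |f y - f x| ∧ |f y - f x| ≤ C₀ * (y - x) := by
    intro x hx y hy hxy
    rcases eq_or_lt_of_le hxy with rfl | hlt
    · simp
    · have hIcc : Set.Icc x y ⊆ I := hI.out hx hy
      have hcont : ContinuousOn f (Set.Icc x y) := fun z hz =>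
        ((hf z (hIcc hz)).mono hIcc).continuousWithinAt
      have hderiv : ∀ z ∈ Set.Ioo x y, HasDerivAt f (f' z) z := by
        intro z hz
        have h1 : HasDerivWithinAt f (f' z) (Set.Icc x y) z :=
          (hf z (hIcc (Set.Ioo_subset_Icc_self hz))).mono hIcc
        exact h1.hasDerivAt (Icc_mem_nhds hz.1 hz.2)
      obtain ⟨ξ, hξ, hslope⟩ := exists_hasDerivAt_eq_slope f f' hlt hcont hderiv
      have hξI : ξ ∈ I := hIcc (Set.Ioo_subset_Icc_self hξ)
      have hyx : 0 < y - x := sub_pos.mpr hlt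
      rw [eq_div_iff (sub_ne_zero.mpr hlt.ne')] at hslope
      obtain ⟨h1, h2⟩ := hb ξ hξI
      have habs : |f y - f x| = |f' ξ| * (y - x) := by
        rw [← hslope, abs_mul, abs_of_pos hyx]
      constructor
      · rw [habs]; nlinarith
      · rw [habs]; nlinarith
  have mvt2 : ∀ x ∈ Set.Icc a b, ∀ y ∈ Set.Icc a b,
      c₀ * |x - y| ≤ |f x - f y| ∧ |f x - f y| ≤ C₀ * |x - y| := by
    intro x hx y hy
    rcases le_total x y with h | h
    · have hm := mvt x (hJ hx) y (hJ hy) h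
      rw [abs_sub_comm x y, abs_sub_comm (f x) (f y),
        abs_of_nonneg (by linarith : (0 : ℝ) ≤ y - x)]
      exact hm
    · have hm := mvt y (hJ hy) x (hJ hx) h
      rw [abs_of_nonneg (by linarith : (0 : ℝ) ≤ x - y)]
      exact hm
  -- main step
  apply aux_card_three
  intro t ht s hs
  simp only [Set.mem_setOf_eq] at ht hs
  by_contra hcon
  push_neg at hcon
  obtain ⟨x, hxJ, hxI, p, q, hq0, -, hqlb, hqub, hxapp⟩ := ht
  obtain ⟨y, hyJ, hyI, p', q', hq'0, -, hq'lb, hq'ub, hyapp⟩ := hs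
  have hq0' : (0 : ℝ) < (q : ℝ) := by exact_mod_cast hq0
  have hq'0' : (0 : ℝ) < (q' : ℝ) := by exact_mod_cast hq'0
  have hxab : x ∈ Set.Icc a b := hsub t x hxJ
  have hyab : y ∈ Set.Icc a b := hsub s y hyJ
  have habs : |x - y| ≤ b - a := by
    rcases hxab with ⟨h1, h2⟩; rcases hyab with ⟨h3, h4⟩
    rw [abs_le]; constructor <;> linarith
  -- bounds c/q² ≤ cR·R^(-n)
  have hcq : c / (q : ℝ) ^ 2 ≤ c * (R : ℝ) * (R : ℝ) ^ (-(n : ℝ)) := by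
    have key : c * (R : ℝ) ^ (n : ℝ) ≤ c * (R : ℝ) * (q : ℝ) ^ 2 := by
      calc c * (R : ℝ) ^ (n : ℝ) = c * (R : ℝ) * (R : ℝ) ^ ((n : ℝ) - 1) := by
            rw [← hpow2]; ring
        _ ≤ c * (R : ℝ) * (q : ℝ) ^ 2 :=
            mul_le_mul_of_nonneg_left hqlb (by positivity)
    rw [hpowneg, ← div_eq_mul_inv, div_le_div_iff₀ (by positivity) hpown]
    linarith [key]
  have hcq' : c / (q' : ℝ) ^ 2 ≤ c * (R : ℝ) * (R : ℝ) ^ (-(n : ℝ)) := by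
    have key : c * (R : ℝ) ^ (n : ℝ) ≤ c * (R : ℝ) * (q' : ℝ) ^ 2 := by
      calc c * (R : ℝ) ^ (n : ℝ) = c * (R : ℝ) * (R : ℝ) ^ ((n : ℝ) - 1) := by
            rw [← hpow2]; ring
        _ ≤ c * (R : ℝ) * (q' : ℝ) ^ 2 :=
            mul_le_mul_of_nonneg_left hq'lb (by positivity)
    rw [hpowneg, ← div_eq_mul_inv, div_le_div_iff₀ (by positivity) hpown]
    linarith [key]
  have hsum : 2 * c * (R : ℝ) + C₀ * c₁ ≤ 1 := by
    have hcc : c₀ * c₁ = 2 * c * (R : ℝ) ^ 2 := by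
      rw [hc₁]; field_simp
    nlinarith [hcc, hsmall, hc₁0, hρ4, hc₀, hC₀, mul_pos hc hρ0]
  have hfxy : |f x - f y| ≤ C₀ * (c₁ * (R : ℝ) ^ (-(n : ℝ))) := by
    have h1 := (mvt2 x hxab y hyab).2
    have h2 : C₀ * |x - y| ≤ C₀ * (b - a) :=
      mul_le_mul_of_nonneg_left habs (by linarith : (0 : ℝ) ≤ C₀)
    rw [hab] at h2; linarith
  -- the two rationals coincide
  have hsame : (p : ℝ) / (q : ℝ) = (p' : ℝ) / (q' : ℝ) := by
    by_contra hne
    have hint : p * (q' : ℤ) - p' * (q : ℤ) ≠ 0 := by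
      intro h0
      exact hne ((div_eq_div_iff hq0'.ne' hq'0'.ne').mpr
        (by exact_mod_cast sub_eq_zero.mp h0))
    have h1le : (1 : ℝ) ≤ |(p : ℝ) * (q' : ℝ) - (p' : ℝ) * (q : ℝ)| := by
      have := Int.one_le_abs hint
      have h2 : (1 : ℝ) ≤ |((p * (q' : ℤ) - p' * (q : ℤ) : ℤ) : ℝ)| := by
        rw [← Int.cast_abs]; exact_mod_cast this
      push_cast at h2; exact h2
    have hdiff : 1 / ((q : ℝ) * (q' : ℝ)) ≤ |(p : ℝ) / q - (p' : ℝ) / q'| := by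
      rw [div_sub_div _ _ hq0'.ne' hq'0'.ne', abs_div,
        abs_of_pos (by positivity : (0 : ℝ) < (q : ℝ) * (q' : ℝ))]
      rw [show (p : ℝ) * q' - (q : ℝ) * p' = (p : ℝ) * q' - (p' : ℝ) * q by ring]
      gcongr
    have hqq' : (q : ℝ) * (q' : ℝ) < (R : ℝ) ^ (n : ℝ) := by
      have h := mul_lt_mul'' hqub hq'ub (by positivity) (by positivity)
      nlinarith [hpown, mul_pos hq0' hq'0']
    have htri : |(p : ℝ) / q - (p' : ℝ) / q'| ≤
        c / (q : ℝ) ^ 2 + C₀ * (c₁ * (R : ℝ) ^ (-(n : ℝ))) + c / (q' : ℝ) ^ 2 := by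
      have t1 := abs_sub_le ((p : ℝ) / q) (f x) ((p' : ℝ) / q')
      have t2 := abs_sub_le (f x) (f y) ((p' : ℝ) / q')
      rw [abs_sub_comm ((p : ℝ) / q) (f x)] at t1
      linarith [hxapp, hyapp, hfxy]
    have hfin : c / (q : ℝ) ^ 2 + C₀ * (c₁ * (R : ℝ) ^ (-(n : ℝ))) + c / (q' : ℝ) ^ 2
        ≤ (R : ℝ) ^ (-(n : ℝ)) := by
      nlinarith [hcq, hcq', hsum, hρn']
    have hlt : (R : ℝ) ^ (-(n : ℝ)) < 1 / ((q : ℝ) * (q' : ℝ)) := by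
      rw [hpowneg, ← one_div]
      exact one_div_lt_one_div_of_lt (by positivity) hqq'
    linarith
  -- diameter bound
  have hfxy2 : |f x - f y| ≤ c / (q : ℝ) ^ 2 + c / (q' : ℝ) ^ 2 := by
    have t1 := abs_sub_le (f x) ((p : ℝ) / q) (f y)
    have h2 : |(p : ℝ) / q - f y| = |f y - (p' : ℝ) / q'| := by
      rw [hsame, abs_sub_comm]
    linarith [hxapp, hyapp, t1, h2.le, h2.ge]
  have hc₀ℓ : c₀ * ℓ = 2 * c * (R : ℝ) * (R : ℝ) ^ (-(n : ℝ)) := by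
    rw [hℓdef, ← hpow1, hc₁]
    field_simp
  have hxy : |x - y| ≤ ℓ := by
    have h1 := (mvt2 x hxab y hyab).1
    have h2 : c / (q : ℝ) ^ 2 + c / (q' : ℝ) ^ 2 ≤ c₀ * ℓ := by
      rw [hc₀ℓ]; linarith [hcq, hcq']
    have h3 : c₀ * |x - y| ≤ c₀ * ℓ := by linarith
    exact le_of_mul_le_mul_left h3 hc₀
  -- contradiction from positions
  have hts : ((s : ℕ) : ℝ) + 3 ≤ ((t : ℕ) : ℝ) := by
    have h3 : (s : ℕ) + 3 ≤ (t : ℕ) := hcon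
    exact_mod_cast h3
  have hx1 := hxJ.1
  have hy2 := hyJ.2
  have hprod : 0 ≤ (((t : ℕ) : ℝ) - ((s : ℕ) : ℝ) - 3) * ℓ :=
    mul_nonneg (by linarith) hℓ0.le
  have hxyle : x - y ≤ ℓ := le_trans (le_abs_self _) hxy
  nlinarith [hx1, hy2, hℓ0, hprod, hxyle]
end
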